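/- arXiv:0903.1164 — 3 statements merged into one kernel-verified Lean document; each statement's English description precedes it below -/
import Mathlib

section
/- Under the hypotheses on (v₁,…,v_d; λ₁,…,λ_d; c; a) stated in the context, the function g₀ satisfies the growth condition (∗) with data (v₁,…,vₙ; a₁,…,aₙ). -/
open Filter

noncomputable section

/-- First directional derivative of `g` at `x` in direction `w`. -/
def pd1 {n : ℕ} (g : (Fin n → ℝ) → ℝ) (x w : Fin n → ℝ) : ℝ :=
  fderiv ℝ g x w

/-- Second derivative (Hessian bilinear form) of `g` at `x` applied to `w₁, w₂`. -/
def pd2 {n : ℕ} (g : (Fin n → ℝ) → ℝ) (x w₁ w₂ : Fin n → ℝ) : ℝ :=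
  fderiv ℝ (fun y => fderiv ℝ g y w₁) x w₂

/-- `ξ(t) = t₁ v₁ + ⋯ + tₙ vₙ`. -/
def xi {n : ℕ} (v : Fin n → (Fin n → ℝ)) (t : Fin n → ℝ) : Fin n → ℝ :=
  ∑ m, t m • v m

/-- The growth condition (∗) with data `(v₁,…,vₙ; a₁,…,aₙ)`. -/
def GrowthCondition {n : ℕ} (v : Fin n → (Fin n → ℝ)) (a : Fin n → ℝ)
    (g : (Fin n → ℝ) → ℝ) : Prop :=
  (∀ j : Fin n, ∀ t : Fin n → ℝ, ∃ L : ℝ,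
    Tendsto (fun s : ℝ =>
        2 * Real.exp (-2 * s) * (pd1 g (xi v (Function.update t j s)) (v j) + a j))
      atBot (nhds L) ∧
    Tendsto (fun s : ℝ =>
        Real.exp (-2 * s) * pd2 g (xi v (Function.update t j s)) (v j) (v j))
      atBot (nhds L)) ∧
  (∀ j k l : Fin n, ∀ t : Fin n → ℝ, ∃ L : ℝ,
    Tendsto (fun s : ℝ => pd2 g (xi v (Function.update t l s)) (v j) (v k))
      atBot (nhds L)) ∧
  (∀ j k : Fin n, j ≠ k → ∀ t : Fin n → ℝ,
    Tendsto (fun s : ℝ =>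
        Real.exp (-s - t k) * pd2 g (xi v (Function.update t j s)) (v j) (v k))
      atBot (nhds 0) ∧
    Tendsto (fun s : ℝ =>
        Real.exp (-(t j) - s) * pd2 g (xi v (Function.update t k s)) (v j) (v k))
      atBot (nhds 0))

/-- The affine-linear function `lᵢ(u) = ⟨u,vᵢ⟩ + λᵢ` (integer version). -/
def lfun {n d : ℕ} (v : Fin d → Fin n → ℤ) (lam : Fin d → ℤ) (i : Fin d)
    (u : Fin n → ℤ) : ℤ :=
  (∑ j, u j * v i j) + lam i

/-- The affine-linear function `lᵢ(x) = ⟨x,vᵢ⟩ + λᵢ` (real version). -/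
def lfunR {n d : ℕ} (v : Fin d → Fin n → ℤ) (lam : Fin d → ℤ) (i : Fin d)
    (x : Fin n → ℝ) : ℝ :=
  (∑ j, x j * (v i j : ℝ)) + (lam i : ℝ)

/-- Guillemin's potential
`g₀(ξ) = -(1/2) Σᵢ aᵢ log( (Σ_{u∈S} c_u lᵢ(u) e^{2⟨u,ξ⟩}) / (Σ_{u∈S} c_u e^{2⟨u,ξ⟩}) )`. -/
def gzero {n d : ℕ} (v : Fin d → Fin n → ℤ) (lam : Fin d → ℤ)
    (S : Finset (Fin n → ℤ)) (c : (Fin n → ℤ) → ℝ) (a : Fin d → ℤ)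
    (ξ : Fin n → ℝ) : ℝ :=
  -(1/2) * ∑ i : Fin d, (a i : ℝ) *
    Real.log ((∑ u ∈ S, c u * (lfun v lam i u : ℝ) * Real.exp (2 * ∑ m, (u m : ℝ) * ξ m)) /
      (∑ u ∈ S, c u * Real.exp (2 * ∑ m, (u m : ℝ) * ξ m)))


open Real Finset

namespace GGrowth

variable {n d : ℕ}

/-- integer-real pairing -/
def ipR (u : Fin n → ℤ) (x : Fin n → ℝ) : ℝ := ∑ m, (u m : ℝ) * x m

def ipL (u : Fin n → ℤ) : (Fin n → ℝ) →L[ℝ] ℝ :=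
  ∑ m, (u m : ℝ) • (ContinuousLinearMap.proj m : ((Fin n → ℝ)) →L[ℝ] ℝ)

lemma ipL_apply (u : Fin n → ℤ) (x : Fin n → ℝ) : ipL u x = ipR u x := by
  simp [ipL, ipR, ContinuousLinearMap.sum_apply]

def Phi (S : Finset (Fin n → ℤ)) (b : (Fin n → ℤ) → ℝ) (x : Fin n → ℝ) : ℝ :=
  ∑ u ∈ S, b u * Real.exp (2 * ipR u x)

def DPhi (S : Finset (Fin n → ℤ)) (b : (Fin n → ℤ) → ℝ) (x : Fin n → ℝ) :
    (Fin n → ℝ) →L[ℝ] ℝ :=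
  ∑ u ∈ S, (b u * Real.exp (2 * ipR u x) * 2) • ipL u

def mrc (b : (Fin n → ℤ) → ℝ) (w : Fin n → ℝ) (u : Fin n → ℤ) : ℝ := b u * (2 * ipR u w)

lemma hasFDerivAt_Phi (S : Finset (Fin n → ℤ)) (b : (Fin n → ℤ) → ℝ) (x : Fin n → ℝ) :
    HasFDerivAt (Phi S b) (DPhi S b x) x := by
  unfold Phi DPhi
  apply HasFDerivAt.fun_sum
  intro u _
  have h0 : HasFDerivAt (fun x : Fin n → ℝ => ipR u x) (ipL u) x := by
    have h := (ipL u).hasFDerivAt (x := x)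
    have : ⇑(ipL u) = fun x : Fin n → ℝ => ipR u x := funext (ipL_apply u)
    rwa [this] at h
  have h1 : HasFDerivAt (fun x : Fin n → ℝ => 2 * ipR u x) ((2 : ℝ) • ipL u) x :=
    h0.const_mul 2
  have h2 := (Real.hasDerivAt_exp (2 * ipR u x)).comp_hasFDerivAt x h1
  have h3 := h2.const_mul (b u)
  have heq : (b u * Real.exp (2 * ipR u x) * 2) • ipL u
      = b u • (Real.exp (2 * ipR u x) • ((2:ℝ) • ipL u)) := by
    rw [smul_smul, smul_smul]
  rw [heq]
  exact h3

lemma DPhi_apply (S : Finset (Fin n → ℤ)) (b : (Fin n → ℤ) → ℝ) (x w : Fin n → ℝ) :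
    DPhi S b x w = Phi S (mrc b w) x := by
  unfold DPhi Phi mrc
  rw [ContinuousLinearMap.sum_apply]
  refine Finset.sum_congr rfl fun u _ => ?_
  rw [ContinuousLinearMap.smul_apply, ipL_apply]
  simp only [smul_eq_mul]
  ring

lemma Phi_pos {S : Finset (Fin n → ℤ)} {b : (Fin n → ℤ) → ℝ}
    (hb0 : ∀ u ∈ S, 0 ≤ b u) (hex : ∃ u ∈ S, 0 < b u) (x : Fin n → ℝ) :
    0 < Phi S b x := by
  apply Finset.sum_pos'
  · intro u hu; exact mul_nonneg (hb0 u hu) (Real.exp_pos _).le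
  · obtain ⟨u, hu, hbu⟩ := hex
    exact ⟨u, hu, mul_pos hbu (Real.exp_pos _)⟩

lemma hasFDerivAt_div {f g : (Fin n → ℝ) → ℝ} {f' g' : (Fin n → ℝ) →L[ℝ] ℝ} {x : Fin n → ℝ}
    (hf : HasFDerivAt f f' x) (hg : HasFDerivAt g g' x) (h : g x ≠ 0) :
    HasFDerivAt (fun y => f y / g y)
      ((g x)⁻¹ • f' + (-(f x * ((g x) ^ 2)⁻¹)) • g') x := by
  have hinv : HasDerivAt (fun z : ℝ => z⁻¹) (-((g x) ^ 2)⁻¹) (g x) := hasDerivAt_inv h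
  have h2 : HasFDerivAt (fun y => (g y)⁻¹) ((-((g x) ^ 2)⁻¹) • g') x :=
    hinv.comp_hasFDerivAt x hg
  have h3 := hf.fun_mul h2
  have hfe : (fun y => f y / g y) = fun y => f y * (g y)⁻¹ := by
    funext y; rw [div_eq_mul_inv]
  rw [hfe]
  have e : (g x)⁻¹ • f' + (-(f x * ((g x) ^ 2)⁻¹)) • g'
      = f x • (-((g x) ^ 2)⁻¹) • g' + (g x)⁻¹ • f' := by
    rw [smul_smul]
    module
  rw [e]
  exact h3


variable (v : Fin d → Fin n → ℤ) (lam : Fin d → ℤ)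

def cl (c : (Fin n → ℤ) → ℝ) (i : Fin d) (u : Fin n → ℤ) : ℝ :=
  c u * (lfun v lam i u : ℝ)

variable (S : Finset (Fin n → ℤ)) (c : (Fin n → ℤ) → ℝ) (a : Fin d → ℤ)

lemma gzero_eq (hpos : ∀ i x, 0 < Phi S (cl v lam c i) x) (hpos0 : ∀ x, 0 < Phi S c x) :
    gzero v lam S c a = fun x => ∑ i : Fin d,
      (-(a i : ℝ)/2) * (Real.log (Phi S (cl v lam c i) x) - Real.log (Phi S c x)) := by
  funext x
  unfold gzero
  rw [Finset.mul_sum]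
  refine Finset.sum_congr rfl fun i _ => ?_
  have h1 : (∑ u ∈ S, c u * (lfun v lam i u : ℝ) * Real.exp (2 * ∑ m, (u m : ℝ) * x m))
      = Phi S (cl v lam c i) x := by
    unfold Phi cl ipR; rfl
  have h2 : (∑ u ∈ S, c u * Real.exp (2 * ∑ m, (u m : ℝ) * x m)) = Phi S c x := by
    unfold Phi ipR; rfl
  rw [h1, h2, Real.log_div (hpos i x).ne' (hpos0 x).ne']
  ring

def Dg (x : Fin n → ℝ) : (Fin n → ℝ) →L[ℝ] ℝ :=
  ∑ i : Fin d, (-(a i : ℝ)/2) •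
    ((Phi S (cl v lam c i) x)⁻¹ • DPhi S (cl v lam c i) x - (Phi S c x)⁻¹ • DPhi S c x)

lemma hasFDerivAt_gzero (hpos : ∀ i x, 0 < Phi S (cl v lam c i) x)
    (hpos0 : ∀ x, 0 < Phi S c x) (x : Fin n → ℝ) :
    HasFDerivAt (gzero v lam S c a) (Dg v lam S c a x) x := by
  rw [gzero_eq v lam S c a hpos hpos0]
  unfold Dg
  apply HasFDerivAt.fun_sum
  intro i _
  exact (((hasFDerivAt_Phi S (cl v lam c i) x).log (hpos i x).ne').sub
    ((hasFDerivAt_Phi S c x).log (hpos0 x).ne')).const_mul _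

lemma pd1_gzero (hpos : ∀ i x, 0 < Phi S (cl v lam c i) x)
    (hpos0 : ∀ x, 0 < Phi S c x) (x w : Fin n → ℝ) :
    pd1 (gzero v lam S c a) x w = ∑ i : Fin d, (-(a i : ℝ)/2) *
      (Phi S (mrc (cl v lam c i) w) x / Phi S (cl v lam c i) x
        - Phi S (mrc c w) x / Phi S c x) := by
  unfold pd1
  rw [(hasFDerivAt_gzero v lam S c a hpos hpos0 x).fderiv]
  unfold Dg
  rw [ContinuousLinearMap.sum_apply]
  refine Finset.sum_congr rfl fun i _ => ?_
  rw [ContinuousLinearMap.smul_apply, ContinuousLinearMap.sub_apply,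
    ContinuousLinearMap.smul_apply, ContinuousLinearMap.smul_apply,
    DPhi_apply, DPhi_apply]
  simp only [smul_eq_mul, div_eq_inv_mul]

lemma pd2_gzero (hpos : ∀ i x, 0 < Phi S (cl v lam c i) x)
    (hpos0 : ∀ x, 0 < Phi S c x) (x w₁ w₂ : Fin n → ℝ) :
    pd2 (gzero v lam S c a) x w₁ w₂ = ∑ i : Fin d, (-(a i : ℝ)/2) *
      ((Phi S (mrc (mrc (cl v lam c i) w₁) w₂) x * Phi S (cl v lam c i) x
          - Phi S (mrc (cl v lam c i) w₁) x * Phi S (mrc (cl v lam c i) w₂) x)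
            / (Phi S (cl v lam c i) x) ^ 2
        - (Phi S (mrc (mrc c w₁) w₂) x * Phi S c x
            - Phi S (mrc c w₁) x * Phi S (mrc c w₂) x) / (Phi S c x) ^ 2) := by
  unfold pd2
  have hfe : (fun y => fderiv ℝ (gzero v lam S c a) y w₁)
      = fun y => ∑ i : Fin d, (-(a i : ℝ)/2) *
        (Phi S (mrc (cl v lam c i) w₁) y / Phi S (cl v lam c i) y
          - Phi S (mrc c w₁) y / Phi S c y) := by
    funext y
    exact pd1_gzero v lam S c a hpos hpos0 y w₁
  rw [hfe]
  have hD : HasFDerivAt (fun y => ∑ i : Fin d, (-(a i : ℝ)/2) *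
        (Phi S (mrc (cl v lam c i) w₁) y / Phi S (cl v lam c i) y
          - Phi S (mrc c w₁) y / Phi S c y))
      (∑ i : Fin d, (-(a i : ℝ)/2) •
        (((Phi S (cl v lam c i) x)⁻¹ • DPhi S (mrc (cl v lam c i) w₁) x
            + (-(Phi S (mrc (cl v lam c i) w₁) x * ((Phi S (cl v lam c i) x) ^ 2)⁻¹))
              • DPhi S (cl v lam c i) x)
          - ((Phi S c x)⁻¹ • DPhi S (mrc c w₁) x
            + (-(Phi S (mrc c w₁) x * ((Phi S c x) ^ 2)⁻¹)) • DPhi S c x))) x := by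
    apply HasFDerivAt.fun_sum
    intro i _
    exact ((hasFDerivAt_div (hasFDerivAt_Phi S (mrc (cl v lam c i) w₁) x)
        (hasFDerivAt_Phi S (cl v lam c i) x) (hpos i x).ne').sub
      (hasFDerivAt_div (hasFDerivAt_Phi S (mrc c w₁) x)
        (hasFDerivAt_Phi S c x) (hpos0 x).ne')).const_mul _
  rw [hD.fderiv, ContinuousLinearMap.sum_apply]
  refine Finset.sum_congr rfl fun i _ => ?_
  rw [ContinuousLinearMap.smul_apply, ContinuousLinearMap.sub_apply,
    ContinuousLinearMap.add_apply, ContinuousLinearMap.add_apply,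
    ContinuousLinearMap.smul_apply, ContinuousLinearMap.smul_apply,
    ContinuousLinearMap.smul_apply, ContinuousLinearMap.smul_apply,
    DPhi_apply, DPhi_apply, DPhi_apply, DPhi_apply]
  simp only [smul_eq_mul]
  have h1 : Phi S (cl v lam c i) x ≠ 0 := (hpos i x).ne'
  have h2 : Phi S c x ≠ 0 := (hpos0 x).ne'
  field_simp
  ring


/-! ### Polynomial-type functions in `q` -/

def PP (S : Finset (Fin n → ℤ)) (β : (Fin n → ℤ) → ℝ) (ε : (Fin n → ℤ) → ℕ) (q : ℝ) : ℝ :=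
  ∑ u ∈ S, β u * q ^ ε u

def cf (S : Finset (Fin n → ℤ)) (β : (Fin n → ℤ) → ℝ) (ε : (Fin n → ℤ) → ℕ) (r : ℕ) : ℝ :=
  ∑ u ∈ S, if ε u = r then β u else 0

def bk (β : (Fin n → ℤ) → ℝ) (ε : (Fin n → ℤ) → ℕ) (k : ℕ) (u : Fin n → ℤ) : ℝ :=
  if ε u < k then 0 else β u

def ek (ε : (Fin n → ℤ) → ℕ) (k : ℕ) (u : Fin n → ℤ) : ℕ := ε u - k

lemma PP_cont (S : Finset (Fin n → ℤ)) (β : (Fin n → ℤ) → ℝ) (ε : (Fin n → ℤ) → ℕ) :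
    Continuous (PP S β ε) := by
  unfold PP
  exact continuous_finset_sum _ fun u _ => continuous_const.mul (continuous_pow _)

lemma bk_zero (β : (Fin n → ℤ) → ℝ) (ε : (Fin n → ℤ) → ℕ) : bk β ε 0 = β := by
  funext u; simp [bk]

lemma ek_zero (ε : (Fin n → ℤ) → ℕ) : ek ε 0 = ε := by
  funext u; simp [ek]

lemma PPk_shift (S : Finset (Fin n → ℤ)) (β : (Fin n → ℤ) → ℝ) (ε : (Fin n → ℤ) → ℕ)
    (k : ℕ) (q : ℝ) :
    PP S (bk β ε k) (ek ε k) q = cf S β ε k + q * PP S (bk β ε (k+1)) (ek ε (k+1)) q := by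
  unfold PP cf bk ek
  rw [Finset.mul_sum, ← Finset.sum_add_distrib]
  refine Finset.sum_congr rfl fun u _ => ?_
  rcases lt_trichotomy (ε u) k with h | h | h
  · have h1 : ε u < k := h
    have h2 : ε u ≠ k := by omega
    have h3 : ε u < k + 1 := by omega
    simp only [if_pos h1, if_pos h3, if_neg h2]
    ring
  · have h1 : ¬ ε u < k := by omega
    have h2 : ε u = k := h
    have h3 : ε u < k + 1 := by omega
    have h0 : ε u - k = 0 := by omega
    simp only [if_neg h1, if_pos h3, if_pos h2, h0, pow_zero]
    ring
  · have h1 : ¬ ε u < k := by omega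
    have h2 : ε u ≠ k := by omega
    have h3 : ¬ ε u < k + 1 := by omega
    have h0 : ε u - k = (ε u - (k+1)) + 1 := by omega
    simp only [if_neg h1, if_neg h3, if_neg h2, h0, pow_succ]
    ring

lemma PPk_zero (S : Finset (Fin n → ℤ)) (β : (Fin n → ℤ) → ℝ) (ε : (Fin n → ℤ) → ℕ)
    (k : ℕ) : PP S (bk β ε k) (ek ε k) 0 = cf S β ε k := by
  have h := PPk_shift S β ε k 0
  simpa using h

lemma mrc_comm (b : (Fin n → ℤ) → ℝ) (w₁ w₂ : Fin n → ℝ) :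
    mrc (mrc b w₁) w₂ = mrc (mrc b w₂) w₁ := by
  funext u; unfold mrc; ring

/-! ### Along the curve -/

section Curve

variable (hnd : n ≤ d)

def Vc (j : Fin n) : Fin n → ℝ := fun p => (v (Fin.castLE hnd j) p : ℝ)

def eN (j : Fin n) (u : Fin n → ℤ) : ℕ := (lfun v lam (Fin.castLE hnd j) u).toNat

def Kf (j : Fin n) (t : Fin n → ℝ) (u : Fin n → ℤ) : ℝ :=
  ∑ m ∈ Finset.univ.erase j,
    t m * ((lfun v lam (Fin.castLE hnd m) u : ℝ) - (lam (Fin.castLE hnd m) : ℝ))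

def wt (j : Fin n) (t : Fin n → ℝ) (b : (Fin n → ℤ) → ℝ) (u : Fin n → ℤ) : ℝ :=
  b u * Real.exp (2 * Kf v lam hnd j t u)

lemma ip_v (u : Fin n → ℤ) (i : Fin d) :
    ipR u (fun p => (v i p : ℝ)) = (lfun v lam i u : ℝ) - lam i := by
  unfold ipR lfun
  push_cast
  ring

lemma ip_xi (u : Fin n → ℤ) (t' : Fin n → ℝ) :
    ipR u (xi (fun m p => (v (Fin.castLE hnd m) p : ℝ)) t')
      = ∑ m, t' m * ((lfun v lam (Fin.castLE hnd m) u : ℝ) - lam (Fin.castLE hnd m)) := by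
  unfold ipR xi
  have h : ∀ p : Fin n, (∑ m, t' m • fun p => (v (Fin.castLE hnd m) p : ℝ)) p
      = ∑ m, t' m * (v (Fin.castLE hnd m) p : ℝ) := by
    intro p
    rw [Finset.sum_apply]
    rfl
  simp only [h]
  simp only [Finset.mul_sum]
  rw [Finset.sum_comm]
  refine Finset.sum_congr rfl fun m _ => ?_
  rw [← ip_v v lam u (Fin.castLE hnd m)]
  unfold ipR
  rw [Finset.mul_sum]
  refine Finset.sum_congr rfl fun p _ => ?_
  ring

lemma ip_curve (j : Fin n) (t : Fin n → ℝ) (s : ℝ) (u : Fin n → ℤ) :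
    ipR u (xi (fun m p => (v (Fin.castLE hnd m) p : ℝ)) (Function.update t j s))
      = s * ((lfun v lam (Fin.castLE hnd j) u : ℝ) - lam (Fin.castLE hnd j))
        + Kf v lam hnd j t u := by
  rw [ip_xi]
  unfold Kf
  rw [← Finset.add_sum_erase _ _ (Finset.mem_univ j), Function.update_self]
  congr 1
  refine Finset.sum_congr rfl fun m hm => ?_
  rw [Function.update_of_ne (Finset.ne_of_mem_erase hm)]

lemma Phi_curve (hSnn : ∀ u ∈ S, ∀ i : Fin d, 0 ≤ lfun v lam i u)
    (b : (Fin n → ℤ) → ℝ) (j : Fin n) (t : Fin n → ℝ) (s : ℝ) :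
    Phi S b (xi (fun m p => (v (Fin.castLE hnd m) p : ℝ)) (Function.update t j s))
      = Real.exp (-(2*s) * (lam (Fin.castLE hnd j) : ℝ))
        * PP S (wt v lam hnd j t b) (eN v lam hnd j) (Real.exp (2*s)) := by
  unfold Phi PP
  rw [Finset.mul_sum]
  refine Finset.sum_congr rfl fun u hu => ?_
  rw [ip_curve]
  have hl : ((lfun v lam (Fin.castLE hnd j) u : ℝ)) = ((eN v lam hnd j u : ℕ) : ℝ) := by
    have h' : lfun v lam (Fin.castLE hnd j) u = ((eN v lam hnd j u : ℕ) : ℤ) := by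
      have := hSnn u hu (Fin.castLE hnd j)
      unfold eN
      omega
    exact_mod_cast congrArg (Int.cast : ℤ → ℝ) h'
  have hexp : Real.exp (2 * (s * ((lfun v lam (Fin.castLE hnd j) u : ℝ)
        - lam (Fin.castLE hnd j)) + Kf v lam hnd j t u))
      = Real.exp (-(2*s) * (lam (Fin.castLE hnd j) : ℝ)) *
        (Real.exp (2 * Kf v lam hnd j t u) * Real.exp (2*s) ^ eN v lam hnd j u) := by
    rw [← Real.exp_nat_mul, ← Real.exp_add, ← Real.exp_add]
    congr 1
    rw [hl]
    ring
  rw [hexp]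
  unfold wt
  ring

lemma cf_mrc (j : Fin n) (t : Fin n → ℝ) (b : (Fin n → ℤ) → ℝ) (r : ℕ)
    (hSnn : ∀ u ∈ S, ∀ i : Fin d, 0 ≤ lfun v lam i u) :
    cf S (wt v lam hnd j t (mrc b (Vc v hnd j))) (eN v lam hnd j) r
      = (2*((r : ℝ) - (lam (Fin.castLE hnd j) : ℝ)))
        * cf S (wt v lam hnd j t b) (eN v lam hnd j) r := by
  unfold cf
  rw [Finset.mul_sum]
  refine Finset.sum_congr rfl fun u hu => ?_
  by_cases h : eN v lam hnd j u = r
  · rw [if_pos h, if_pos h]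
    unfold wt mrc Vc
    rw [ip_v]
    have hl : ((lfun v lam (Fin.castLE hnd j) u : ℝ)) = (r : ℝ) := by
      have h' : lfun v lam (Fin.castLE hnd j) u = ((r : ℕ) : ℤ) := by
        have := hSnn u hu (Fin.castLE hnd j)
        unfold eN at h
        omega
      exact_mod_cast congrArg (Int.cast : ℤ → ℝ) h'
    rw [hl]
    ring
  · rw [if_neg h, if_neg h]
    ring

end Curve

/-! ### helpers -/

lemma PP_pos' {β : (Fin n → ℤ) → ℝ} {ε : (Fin n → ℤ) → ℕ} {q : ℝ} (hq : 0 < q)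
    (hb0 : ∀ u ∈ S, 0 ≤ β u) (hex : ∃ u ∈ S, 0 < β u) : 0 < PP S β ε q := by
  apply Finset.sum_pos'
  · intro u hu; exact mul_nonneg (hb0 u hu) (pow_pos hq _).le
  · obtain ⟨u, hu, hbu⟩ := hex
    exact ⟨u, hu, mul_pos hbu (pow_pos hq _)⟩

lemma cf_pos' {β : (Fin n → ℤ) → ℝ} {ε : (Fin n → ℤ) → ℕ} {r : ℕ}
    (hb0 : ∀ u ∈ S, 0 ≤ β u) (hex : ∃ u ∈ S, 0 < β u ∧ ε u = r) : 0 < cf S β ε r := by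
  apply Finset.sum_pos'
  · intro u hu
    split
    · exact hb0 u hu
    · exact le_refl 0
  · obtain ⟨u, hu, hbu, hεu⟩ := hex
    exact ⟨u, hu, by rw [if_pos hεu]; exact hbu⟩

lemma cf_vanish {β : (Fin n → ℤ) → ℝ} {ε : (Fin n → ℤ) → ℕ} {r : ℕ}
    (h : ∀ u ∈ S, ε u = r → β u = 0) : cf S β ε r = 0 := by
  unfold cf
  refine Finset.sum_eq_zero fun u hu => ?_
  split
  · exact h u hu ‹_›
  · rfl

section Curve2

variable (hnd : n ≤ d)

def Pk (j : Fin n) (t : Fin n → ℝ) (b : (Fin n → ℤ) → ℝ) (k : ℕ) : ℝ → ℝ :=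
  fun q => PP S (bk (wt v lam hnd j t b) (eN v lam hnd j) k) (ek (eN v lam hnd j) k) q

def cfk (j : Fin n) (t : Fin n → ℝ) (b : (Fin n → ℤ) → ℝ) (k : ℕ) : ℝ :=
  cf S (wt v lam hnd j t b) (eN v lam hnd j) k

lemma Pk_cont (j : Fin n) (t : Fin n → ℝ) (b : (Fin n → ℤ) → ℝ) (k : ℕ) :
    Continuous (Pk v lam S hnd j t b k) := PP_cont _ _ _

lemma Pk_shift (j : Fin n) (t : Fin n → ℝ) (b : (Fin n → ℤ) → ℝ) (k : ℕ) (q : ℝ) :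
    Pk v lam S hnd j t b k q = cfk v lam S hnd j t b k + q * Pk v lam S hnd j t b (k+1) q :=
  PPk_shift S _ _ k q

lemma Pk_zero (j : Fin n) (t : Fin n → ℝ) (b : (Fin n → ℤ) → ℝ) (k : ℕ) :
    Pk v lam S hnd j t b k 0 = cfk v lam S hnd j t b k := PPk_zero S _ _ k

lemma Phi_curve' (hSnn : ∀ u ∈ S, ∀ i : Fin d, 0 ≤ lfun v lam i u)
    (b : (Fin n → ℤ) → ℝ) (j : Fin n) (t : Fin n → ℝ) (s : ℝ) :
    Phi S b (xi (fun m p => (v (Fin.castLE hnd m) p : ℝ)) (Function.update t j s))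
      = Real.exp (-(2*s) * (lam (Fin.castLE hnd j) : ℝ))
        * Pk v lam S hnd j t b 0 (Real.exp (2*s)) := by
  rw [Phi_curve v lam S hnd hSnn b j t s]
  unfold Pk
  rw [bk_zero, ek_zero]

lemma Pk_factor (j : Fin n) (t : Fin n → ℝ) (b : (Fin n → ℤ) → ℝ)
    (hb : ∀ u ∈ S, eN v lam hnd j u = 0 → b u = 0) (q : ℝ) :
    Pk v lam S hnd j t b 0 q = q * Pk v lam S hnd j t b 1 q := by
  rw [Pk_shift]
  have h0 : cfk v lam S hnd j t b 0 = 0 := by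
    apply cf_vanish
    intro u hu he
    unfold wt
    rw [hb u hu he]
    ring
  rw [h0, zero_add]

lemma tendsto_q : Tendsto (fun s : ℝ => Real.exp (2*s)) atBot (nhds 0) := by
  have h : ∀ s : ℝ, Real.exp (2*s) = Real.exp s * Real.exp s := by
    intro s; rw [← Real.exp_add]; ring_nf
  simp only [h]
  simpa using Real.tendsto_exp_atBot.mul Real.tendsto_exp_atBot

lemma tendsto_PkQ (j : Fin n) (t : Fin n → ℝ) (b : (Fin n → ℤ) → ℝ) (k : ℕ) :
    Tendsto (fun s : ℝ => Pk v lam S hnd j t b k (Real.exp (2*s))) atBot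
      (nhds (cfk v lam S hnd j t b k)) := by
  rw [← Pk_zero v lam S hnd j t b k]
  exact ((Pk_cont v lam S hnd j t b k).tendsto 0).comp (tendsto_q)


def Rat1 (j : Fin n) (t : Fin n → ℝ) (b : (Fin n → ℤ) → ℝ) (w : Fin n → ℝ) (k : ℕ)
    (q : ℝ) : ℝ :=
  Pk v lam S hnd j t (mrc b w) k q / Pk v lam S hnd j t b k q

def Rat2 (j : Fin n) (t : Fin n → ℝ) (b : (Fin n → ℤ) → ℝ) (w₁ w₂ : Fin n → ℝ) (k : ℕ)
    (q : ℝ) : ℝ :=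
  (Pk v lam S hnd j t (mrc (mrc b w₁) w₂) k q * Pk v lam S hnd j t b k q
    - Pk v lam S hnd j t (mrc b w₁) k q * Pk v lam S hnd j t (mrc b w₂) k q)
      / (Pk v lam S hnd j t b k q)^2

lemma pd1_curve (hpos : ∀ i x, 0 < Phi S (cl v lam c i) x) (hpos0 : ∀ x, 0 < Phi S c x)
    (hSnn : ∀ u ∈ S, ∀ i : Fin d, 0 ≤ lfun v lam i u) (j : Fin n) (t : Fin n → ℝ)
    (w : Fin n → ℝ) (s : ℝ) :
    pd1 (gzero v lam S c a) (xi (fun m p => (v (Fin.castLE hnd m) p : ℝ))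
        (Function.update t j s)) w
      = ∑ i : Fin d, (-(a i : ℝ)/2) *
        (Rat1 v lam S hnd j t (cl v lam c i) w 0 (Real.exp (2*s))
          - Rat1 v lam S hnd j t c w 0 (Real.exp (2*s))) := by
  rw [pd1_gzero v lam S c a hpos hpos0]
  refine Finset.sum_congr rfl fun i _ => ?_
  rw [Phi_curve' v lam S hnd hSnn, Phi_curve' v lam S hnd hSnn,
    Phi_curve' v lam S hnd hSnn, Phi_curve' v lam S hnd hSnn]
  unfold Rat1
  have hE : Real.exp (-(2*s) * (lam (Fin.castLE hnd j) : ℝ)) ≠ 0 := (Real.exp_pos _).ne'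
  rw [mul_div_mul_left _ _ hE, mul_div_mul_left _ _ hE]

lemma pd2_curve (hpos : ∀ i x, 0 < Phi S (cl v lam c i) x) (hpos0 : ∀ x, 0 < Phi S c x)
    (hSnn : ∀ u ∈ S, ∀ i : Fin d, 0 ≤ lfun v lam i u) (j : Fin n) (t : Fin n → ℝ)
    (w₁ w₂ : Fin n → ℝ) (s : ℝ) :
    pd2 (gzero v lam S c a) (xi (fun m p => (v (Fin.castLE hnd m) p : ℝ))
        (Function.update t j s)) w₁ w₂
      = ∑ i : Fin d, (-(a i : ℝ)/2) *
        (Rat2 v lam S hnd j t (cl v lam c i) w₁ w₂ 0 (Real.exp (2*s))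
          - Rat2 v lam S hnd j t c w₁ w₂ 0 (Real.exp (2*s))) := by
  rw [pd2_gzero v lam S c a hpos hpos0]
  refine Finset.sum_congr rfl fun i _ => ?_
  rw [Phi_curve' v lam S hnd hSnn, Phi_curve' v lam S hnd hSnn,
    Phi_curve' v lam S hnd hSnn, Phi_curve' v lam S hnd hSnn,
    Phi_curve' v lam S hnd hSnn, Phi_curve' v lam S hnd hSnn,
    Phi_curve' v lam S hnd hSnn, Phi_curve' v lam S hnd hSnn]
  unfold Rat2
  have hE : Real.exp (-(2*s) * (lam (Fin.castLE hnd j) : ℝ)) ≠ 0 := (Real.exp_pos _).ne'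
  have key : ∀ A B C D : ℝ,
      ((Real.exp (-(2*s) * (lam (Fin.castLE hnd j) : ℝ)) * A)
        * (Real.exp (-(2*s) * (lam (Fin.castLE hnd j) : ℝ)) * B)
       - (Real.exp (-(2*s) * (lam (Fin.castLE hnd j) : ℝ)) * C)
        * (Real.exp (-(2*s) * (lam (Fin.castLE hnd j) : ℝ)) * D))
        / (Real.exp (-(2*s) * (lam (Fin.castLE hnd j) : ℝ)) * B)^2
      = (A * B - C * D) / B^2 := by
    intro A B C D
    rw [show (Real.exp (-(2*s) * (lam (Fin.castLE hnd j) : ℝ)) * A)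
        * (Real.exp (-(2*s) * (lam (Fin.castLE hnd j) : ℝ)) * B)
       - (Real.exp (-(2*s) * (lam (Fin.castLE hnd j) : ℝ)) * C)
        * (Real.exp (-(2*s) * (lam (Fin.castLE hnd j) : ℝ)) * D)
        = (Real.exp (-(2*s) * (lam (Fin.castLE hnd j) : ℝ)))^2 * (A * B - C * D) from by ring,
      show (Real.exp (-(2*s) * (lam (Fin.castLE hnd j) : ℝ)) * B)^2
        = (Real.exp (-(2*s) * (lam (Fin.castLE hnd j) : ℝ)))^2 * B^2 from by ring,
      mul_div_mul_left _ _ (pow_ne_zero 2 hE)]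
  rw [key, key]

lemma mrc_vanish {j : Fin n} {b : (Fin n → ℤ) → ℝ}
    (hb : ∀ u ∈ S, eN v lam hnd j u = 0 → b u = 0) (w : Fin n → ℝ) :
    ∀ u ∈ S, eN v lam hnd j u = 0 → mrc b w u = 0 := by
  intro u hu he
  unfold mrc
  rw [hb u hu he]
  ring

lemma Rat2_shift (j : Fin n) (t : Fin n → ℝ) (b : (Fin n → ℤ) → ℝ) (w₁ w₂ : Fin n → ℝ)
    (hb : ∀ u ∈ S, eN v lam hnd j u = 0 → b u = 0) {q : ℝ} (hq : q ≠ 0) :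
    Rat2 v lam S hnd j t b w₁ w₂ 0 q = Rat2 v lam S hnd j t b w₁ w₂ 1 q := by
  unfold Rat2
  rw [Pk_factor v lam S hnd j t _ (mrc_vanish v lam S hnd (mrc_vanish v lam S hnd hb w₁) w₂),
    Pk_factor v lam S hnd j t _ hb,
    Pk_factor v lam S hnd j t _ (mrc_vanish v lam S hnd hb w₁),
    Pk_factor v lam S hnd j t _ (mrc_vanish v lam S hnd hb w₂)]
  rw [show (q * Pk v lam S hnd j t (mrc (mrc b w₁) w₂) 1 q) * (q * Pk v lam S hnd j t b 1 q)
      - (q * Pk v lam S hnd j t (mrc b w₁) 1 q) * (q * Pk v lam S hnd j t (mrc b w₂) 1 q)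
      = q^2 * (Pk v lam S hnd j t (mrc (mrc b w₁) w₂) 1 q * Pk v lam S hnd j t b 1 q
        - Pk v lam S hnd j t (mrc b w₁) 1 q * Pk v lam S hnd j t (mrc b w₂) 1 q) from by ring,
    show (q * Pk v lam S hnd j t b 1 q)^2 = q^2 * (Pk v lam S hnd j t b 1 q)^2 from by ring,
    mul_div_mul_left _ _ (pow_ne_zero 2 hq)]

lemma tendsto_Rat2 (j : Fin n) (t : Fin n → ℝ) (b : (Fin n → ℤ) → ℝ) (w₁ w₂ : Fin n → ℝ)
    (k : ℕ) (hD : cfk v lam S hnd j t b k ≠ 0) :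
    Tendsto (fun s : ℝ => Rat2 v lam S hnd j t b w₁ w₂ k (Real.exp (2*s))) atBot
      (nhds ((cfk v lam S hnd j t (mrc (mrc b w₁) w₂) k * cfk v lam S hnd j t b k
        - cfk v lam S hnd j t (mrc b w₁) k * cfk v lam S hnd j t (mrc b w₂) k)
          / (cfk v lam S hnd j t b k)^2)) := by
  unfold Rat2
  exact (((tendsto_PkQ v lam S hnd j t _ k).mul (tendsto_PkQ v lam S hnd j t b k)).sub
    ((tendsto_PkQ v lam S hnd j t _ k).mul (tendsto_PkQ v lam S hnd j t _ k))).div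
    ((tendsto_PkQ v lam S hnd j t b k).pow 2) (pow_ne_zero 2 hD)


lemma wt_c_nonneg (hc : ∀ u ∈ S, 0 ≤ c u) (j : Fin n) (t : Fin n → ℝ) :
    ∀ u ∈ S, 0 ≤ wt v lam hnd j t c u :=
  fun u hu => mul_nonneg (hc u hu) (Real.exp_pos _).le

lemma wt_cl_nonneg (hc : ∀ u ∈ S, 0 ≤ c u)
    (hSnn : ∀ u ∈ S, ∀ i : Fin d, 0 ≤ lfun v lam i u) (i : Fin d) (j : Fin n)
    (t : Fin n → ℝ) : ∀ u ∈ S, 0 ≤ wt v lam hnd j t (cl v lam c i) u :=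
  fun u hu => mul_nonneg (mul_nonneg (hc u hu)
    (by exact_mod_cast hSnn u hu i)) (Real.exp_pos _).le

lemma eN_of_lfun {j : Fin n} {u : Fin n → ℤ} {r : ℕ}
    (h : lfun v lam (Fin.castLE hnd j) u = (r : ℤ)) : eN v lam hnd j u = r := by
  unfold eN
  omega

lemma cfk_c_pos (hc : ∀ u ∈ S, 0 ≤ c u) (u₀ : Fin n → ℤ) (hu₀S : u₀ ∈ S)
    (hu₀c : 0 < c u₀) (hu₀l : ∀ j : Fin n, lfun v lam (Fin.castLE hnd j) u₀ = 0)
    (j : Fin n) (t : Fin n → ℝ) : 0 < cfk v lam S hnd j t c 0 :=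
  cf_pos' S (wt_c_nonneg v lam S c hnd hc j t)
    ⟨u₀, hu₀S, mul_pos hu₀c (Real.exp_pos _), eN_of_lfun v lam hnd (by rw [hu₀l j]; rfl)⟩

lemma cfk_cl_pos (hc : ∀ u ∈ S, 0 ≤ c u)
    (hSnn : ∀ u ∈ S, ∀ i : Fin d, 0 ≤ lfun v lam i u)
    (u₀ : Fin n → ℤ) (hu₀S : u₀ ∈ S) (hu₀c : 0 < c u₀)
    (hu₀l : ∀ j : Fin n, lfun v lam (Fin.castLE hnd j) u₀ = 0)
    (hu₀i : ∀ i : Fin d, n ≤ (i : ℕ) → 1 ≤ lfun v lam i u₀)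
    (uk : Fin n → (Fin n → ℤ)) (hukS : ∀ m, uk m ∈ S) (hukc : ∀ m, 0 < c (uk m))
    (hukl : ∀ m, lfun v lam (Fin.castLE hnd m) (uk m) = 1)
    (hukl0 : ∀ m m' : Fin n, m' ≠ m → lfun v lam (Fin.castLE hnd m') (uk m) = 0)
    (i : Fin d) (j : Fin n) (hij : i ≠ Fin.castLE hnd j) (t : Fin n → ℝ) :
    0 < cfk v lam S hnd j t (cl v lam c i) 0 := by
  apply cf_pos' S (wt_cl_nonneg v lam S c hnd hc hSnn i j t)
  by_cases hin : (i : ℕ) < n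
  · have hcast : Fin.castLE hnd ⟨(i : ℕ), hin⟩ = i := by
      apply Fin.ext; rfl
    have hne : j ≠ ⟨(i : ℕ), hin⟩ := by
      intro h
      apply hij
      rw [h, hcast]
    refine ⟨uk ⟨(i : ℕ), hin⟩, hukS _, ?_, ?_⟩
    · unfold wt cl
      have h1 : lfun v lam i (uk ⟨(i : ℕ), hin⟩) = 1 := by
        have h2 := hukl ⟨(i : ℕ), hin⟩
        rw [hcast] at h2
        exact h2
      rw [h1]
      simpa using mul_pos (hukc _) (Real.exp_pos _)
    · exact eN_of_lfun v lam hnd (by rw [hukl0 _ _ hne]; rfl)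
  · refine ⟨u₀, hu₀S, ?_, eN_of_lfun v lam hnd (by rw [hu₀l j]; rfl)⟩
    unfold wt cl
    have h1 : (1 : ℝ) ≤ (lfun v lam i u₀ : ℝ) := by
      exact_mod_cast hu₀i i (le_of_not_gt hin)
    exact mul_pos (mul_pos hu₀c (lt_of_lt_of_le one_pos h1))
      (Real.exp_pos (2 * Kf v lam hnd j t u₀))

lemma cfk_clj_pos (hc : ∀ u ∈ S, 0 ≤ c u)
    (hSnn : ∀ u ∈ S, ∀ i : Fin d, 0 ≤ lfun v lam i u)
    (uk : Fin n → (Fin n → ℤ)) (hukS : ∀ m, uk m ∈ S) (hukc : ∀ m, 0 < c (uk m))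
    (hukl : ∀ m, lfun v lam (Fin.castLE hnd m) (uk m) = 1)
    (j : Fin n) (t : Fin n → ℝ) :
    0 < cfk v lam S hnd j t (cl v lam c (Fin.castLE hnd j)) 1 := by
  apply cf_pos' S (wt_cl_nonneg v lam S c hnd hc hSnn _ j t)
  refine ⟨uk j, hukS j, ?_, eN_of_lfun v lam hnd (by rw [hukl j]; rfl)⟩
  unfold wt cl
  rw [hukl j]
  simpa using mul_pos (hukc j) (Real.exp_pos _)

lemma cl_vanish (j : Fin n) (i : Fin d) (hi : i = Fin.castLE hnd j)
    (hSnn : ∀ u ∈ S, ∀ i : Fin d, 0 ≤ lfun v lam i u) :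
    ∀ u ∈ S, eN v lam hnd j u = 0 → cl v lam c i u = 0 := by
  intro u hu he
  unfold cl
  have h0 : lfun v lam i u = 0 := by
    subst hi
    have := hSnn u hu (Fin.castLE hnd j)
    unfold eN at he
    omega
  rw [h0]
  simp


variable (a : Fin d → ℤ)

lemma part2 (hc : ∀ u ∈ S, 0 ≤ c u)
    (hSnn : ∀ u ∈ S, ∀ i : Fin d, 0 ≤ lfun v lam i u)
    (hpos : ∀ i x, 0 < Phi S (cl v lam c i) x) (hpos0 : ∀ x, 0 < Phi S c x)
    (u₀ : Fin n → ℤ) (hu₀S : u₀ ∈ S) (hu₀c : 0 < c u₀)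
    (hu₀l : ∀ j : Fin n, lfun v lam (Fin.castLE hnd j) u₀ = 0)
    (hu₀i : ∀ i : Fin d, n ≤ (i : ℕ) → 1 ≤ lfun v lam i u₀)
    (uk : Fin n → (Fin n → ℤ)) (hukS : ∀ m, uk m ∈ S) (hukc : ∀ m, 0 < c (uk m))
    (hukl : ∀ m, lfun v lam (Fin.castLE hnd m) (uk m) = 1)
    (hukl0 : ∀ m m' : Fin n, m' ≠ m → lfun v lam (Fin.castLE hnd m') (uk m) = 0)
    (j k l : Fin n) (t : Fin n → ℝ) :
    ∃ L : ℝ, Tendsto (fun s : ℝ =>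
      pd2 (gzero v lam S c a) (xi (fun m p => (v (Fin.castLE hnd m) p : ℝ))
        (Function.update t l s)) (Vc v hnd j) (Vc v hnd k)) atBot (nhds L) := by
  have hterm : ∀ i : Fin d, ∃ Li : ℝ, Tendsto (fun s : ℝ => (-(a i : ℝ)/2) *
      (Rat2 v lam S hnd l t (cl v lam c i) (Vc v hnd j) (Vc v hnd k) 0 (Real.exp (2*s))
        - Rat2 v lam S hnd l t c (Vc v hnd j) (Vc v hnd k) 0 (Real.exp (2*s))))
      atBot (nhds Li) := by
    intro i
    have hcpart := tendsto_Rat2 v lam S hnd l t c (Vc v hnd j) (Vc v hnd k) 0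
      (cfk_c_pos v lam S c hnd hc u₀ hu₀S hu₀c hu₀l l t).ne'
    by_cases hi : i = Fin.castLE hnd l
    · have hfac := cl_vanish v lam S c hnd l i hi hSnn
      have hipart := tendsto_Rat2 v lam S hnd l t (cl v lam c i) (Vc v hnd j)
        (Vc v hnd k) 1 (by
          rw [hi]
          exact (cfk_clj_pos v lam S c hnd hc hSnn uk hukS hukc hukl l t).ne')
      have h1 := hipart.congr fun s : ℝ =>
        (Rat2_shift v lam S hnd l t (cl v lam c i) (Vc v hnd j) (Vc v hnd k) hfac
          (Real.exp_pos (2*s)).ne').symm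
      exact ⟨_, (h1.sub hcpart).const_mul _⟩
    · have hipart := tendsto_Rat2 v lam S hnd l t (cl v lam c i) (Vc v hnd j)
        (Vc v hnd k) 0 (cfk_cl_pos v lam S c hnd hc hSnn u₀ hu₀S hu₀c hu₀l hu₀i uk
          hukS hukc hukl hukl0 i l hi t).ne'
      exact ⟨_, (hipart.sub hcpart).const_mul _⟩
  choose L hL using hterm
  refine ⟨∑ i : Fin d, L i, ?_⟩
  have hfun : (fun s : ℝ => pd2 (gzero v lam S c a)
      (xi (fun m p => (v (Fin.castLE hnd m) p : ℝ)) (Function.update t l s))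
      (Vc v hnd j) (Vc v hnd k))
      = fun s : ℝ => ∑ i : Fin d, (-(a i : ℝ)/2) *
        (Rat2 v lam S hnd l t (cl v lam c i) (Vc v hnd j) (Vc v hnd k) 0 (Real.exp (2*s))
          - Rat2 v lam S hnd l t c (Vc v hnd j) (Vc v hnd k) 0 (Real.exp (2*s))) :=
    funext fun s => pd2_curve v lam S c a hnd hpos hpos0 hSnn l t _ _ s
  rw [hfun]
  exact tendsto_finset_sum _ fun i _ => hL i


def M2 (j : Fin n) (t : Fin n → ℝ) (b : (Fin n → ℤ) → ℝ) (w₁ w₂ : Fin n → ℝ) (k : ℕ) :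
    ℝ → ℝ := fun q =>
  cfk v lam S hnd j t (mrc (mrc b w₁) w₂) k * Pk v lam S hnd j t b (k+1) q
    + Pk v lam S hnd j t (mrc (mrc b w₁) w₂) (k+1) q * Pk v lam S hnd j t b k q
    - cfk v lam S hnd j t (mrc b w₁) k * Pk v lam S hnd j t (mrc b w₂) (k+1) q
    - Pk v lam S hnd j t (mrc b w₁) (k+1) q * Pk v lam S hnd j t (mrc b w₂) k q

lemma M2_cont (j : Fin n) (t : Fin n → ℝ) (b : (Fin n → ℤ) → ℝ) (w₁ w₂ : Fin n → ℝ)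
    (k : ℕ) : Continuous (M2 v lam S hnd j t b w₁ w₂ k) := by
  unfold M2
  exact (((continuous_const.mul (Pk_cont v lam S hnd j t b (k+1))).add
    ((Pk_cont v lam S hnd j t _ (k+1)).mul (Pk_cont v lam S hnd j t b k))).sub
    (continuous_const.mul (Pk_cont v lam S hnd j t _ (k+1)))).sub
    ((Pk_cont v lam S hnd j t _ (k+1)).mul (Pk_cont v lam S hnd j t _ k))

lemma N2_eq (j : Fin n) (t : Fin n → ℝ) (b : (Fin n → ℤ) → ℝ) (w₁ w₂ : Fin n → ℝ)
    (k : ℕ)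
    (hconst : cfk v lam S hnd j t (mrc (mrc b w₁) w₂) k * cfk v lam S hnd j t b k
      - cfk v lam S hnd j t (mrc b w₁) k * cfk v lam S hnd j t (mrc b w₂) k = 0)
    (q : ℝ) :
    Pk v lam S hnd j t (mrc (mrc b w₁) w₂) k q * Pk v lam S hnd j t b k q
      - Pk v lam S hnd j t (mrc b w₁) k q * Pk v lam S hnd j t (mrc b w₂) k q
      = q * M2 v lam S hnd j t b w₁ w₂ k q := by
  unfold M2
  rw [Pk_shift v lam S hnd j t (mrc (mrc b w₁) w₂) k q, Pk_shift v lam S hnd j t b k q,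
    Pk_shift v lam S hnd j t (mrc b w₁) k q, Pk_shift v lam S hnd j t (mrc b w₂) k q]
  linear_combination hconst

lemma cfN2_const (hSnn : ∀ u ∈ S, ∀ i : Fin d, 0 ≤ lfun v lam i u)
    (j : Fin n) (t : Fin n → ℝ) (b : (Fin n → ℤ) → ℝ) (w₂ : Fin n → ℝ) (k : ℕ) :
    cfk v lam S hnd j t (mrc (mrc b (Vc v hnd j)) w₂) k * cfk v lam S hnd j t b k
      - cfk v lam S hnd j t (mrc b (Vc v hnd j)) k * cfk v lam S hnd j t (mrc b w₂) k
      = 0 := by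
  have h1 : mrc (mrc b (Vc v hnd j)) w₂ = mrc (mrc b w₂) (Vc v hnd j) := mrc_comm b _ w₂
  rw [h1]
  unfold cfk
  rw [cf_mrc v lam S hnd j t (mrc b w₂) k hSnn, cf_mrc v lam S hnd j t b k hSnn]
  ring

lemma part3_piece (j : Fin n) (t : Fin n → ℝ) (b : (Fin n → ℤ) → ℝ) (w₂ : Fin n → ℝ)
    (k' : ℕ) (hD : cfk v lam S hnd j t b k' ≠ 0)
    (hSnn : ∀ u ∈ S, ∀ i : Fin d, 0 ≤ lfun v lam i u) (C : ℝ) :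
    Tendsto (fun s : ℝ => C * Real.exp (-s)
      * Rat2 v lam S hnd j t b (Vc v hnd j) w₂ k' (Real.exp (2*s))) atBot (nhds 0) := by
  have hconst := cfN2_const v lam S hnd hSnn j t b w₂ k'
  have hident : ∀ s : ℝ, C * Real.exp (-s)
      * Rat2 v lam S hnd j t b (Vc v hnd j) w₂ k' (Real.exp (2*s))
      = (C * Real.exp s) * (M2 v lam S hnd j t b (Vc v hnd j) w₂ k' (Real.exp (2*s))
        / (Pk v lam S hnd j t b k' (Real.exp (2*s)))^2) := by
    intro s
    unfold Rat2
    rw [N2_eq v lam S hnd j t b (Vc v hnd j) w₂ k' hconst (Real.exp (2*s))]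
    have h : Real.exp (-s) * Real.exp (2*s) = Real.exp s := by
      rw [← Real.exp_add]; ring_nf
    rw [← h]
    ring
  have hA : Tendsto (fun s : ℝ => C * Real.exp s) atBot (nhds (C * 0)) :=
    Real.tendsto_exp_atBot.const_mul C
  have hB : Tendsto (fun s : ℝ => M2 v lam S hnd j t b (Vc v hnd j) w₂ k' (Real.exp (2*s))
      / (Pk v lam S hnd j t b k' (Real.exp (2*s)))^2) atBot
      (nhds (M2 v lam S hnd j t b (Vc v hnd j) w₂ k' 0 / (cfk v lam S hnd j t b k')^2)) := by
    refine Tendsto.div ?_ ((tendsto_PkQ v lam S hnd j t b k').pow 2) (pow_ne_zero 2 hD)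
    exact ((M2_cont v lam S hnd j t b (Vc v hnd j) w₂ k').tendsto 0).comp tendsto_q
  have := hA.mul hB
  simp only [funext hident]
  simpa using this

lemma part3 (hc : ∀ u ∈ S, 0 ≤ c u)
    (hSnn : ∀ u ∈ S, ∀ i : Fin d, 0 ≤ lfun v lam i u)
    (hpos : ∀ i x, 0 < Phi S (cl v lam c i) x) (hpos0 : ∀ x, 0 < Phi S c x)
    (u₀ : Fin n → ℤ) (hu₀S : u₀ ∈ S) (hu₀c : 0 < c u₀)
    (hu₀l : ∀ j : Fin n, lfun v lam (Fin.castLE hnd j) u₀ = 0)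
    (hu₀i : ∀ i : Fin d, n ≤ (i : ℕ) → 1 ≤ lfun v lam i u₀)
    (uk : Fin n → (Fin n → ℤ)) (hukS : ∀ m, uk m ∈ S) (hukc : ∀ m, 0 < c (uk m))
    (hukl : ∀ m, lfun v lam (Fin.castLE hnd m) (uk m) = 1)
    (hukl0 : ∀ m m' : Fin n, m' ≠ m → lfun v lam (Fin.castLE hnd m') (uk m) = 0)
    (j : Fin n) (t : Fin n → ℝ) (w₂ : Fin n → ℝ) (C : ℝ) :
    Tendsto (fun s : ℝ => C * Real.exp (-s) *
      pd2 (gzero v lam S c a) (xi (fun m p => (v (Fin.castLE hnd m) p : ℝ))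
        (Function.update t j s)) (Vc v hnd j) w₂) atBot (nhds 0) := by
  have hfun : ∀ s : ℝ, C * Real.exp (-s) *
      pd2 (gzero v lam S c a) (xi (fun m p => (v (Fin.castLE hnd m) p : ℝ))
        (Function.update t j s)) (Vc v hnd j) w₂
      = ∑ i : Fin d,
        ((-(a i : ℝ)/2) * C * Real.exp (-s) *
          Rat2 v lam S hnd j t (cl v lam c i) (Vc v hnd j) w₂ 0 (Real.exp (2*s))
        - (-(a i : ℝ)/2) * C * Real.exp (-s) *
          Rat2 v lam S hnd j t c (Vc v hnd j) w₂ 0 (Real.exp (2*s))) := by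
    intro s
    rw [pd2_curve v lam S c a hnd hpos hpos0 hSnn j t _ _ s, Finset.mul_sum]
    refine Finset.sum_congr rfl fun i _ => ?_
    ring
  simp only [funext hfun]
  have hzero : (0 : ℝ) = ∑ _i : Fin d, ((0 : ℝ) - 0) := by simp
  rw [hzero]
  apply tendsto_finset_sum
  intro i _
  have hcpart := part3_piece v lam S hnd j t c w₂ 0
    (cfk_c_pos v lam S c hnd hc u₀ hu₀S hu₀c hu₀l j t).ne' hSnn ((-(a i : ℝ)/2) * C)
  refine Tendsto.sub ?_ hcpart
  by_cases hi : i = Fin.castLE hnd j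
  · have hfac := cl_vanish v lam S c hnd j i hi hSnn
    have h1 := part3_piece v lam S hnd j t (cl v lam c i) w₂ 1
      (by rw [hi]; exact (cfk_clj_pos v lam S c hnd hc hSnn uk hukS hukc hukl j t).ne')
      hSnn ((-(a i : ℝ)/2) * C)
    apply h1.congr
    intro s
    rw [Rat2_shift v lam S hnd j t (cl v lam c i) (Vc v hnd j) w₂ hfac
      (Real.exp_pos (2*s)).ne']
  · have h1 := part3_piece v lam S hnd j t (cl v lam c i) w₂ 0
      (cfk_cl_pos v lam S c hnd hc hSnn u₀ hu₀S hu₀c hu₀l hu₀i uk hukS hukc hukl hukl0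
        i j hi t).ne' hSnn ((-(a i : ℝ)/2) * C)
    exact h1


/-! ### Part 1 machinery -/

def MA (j : Fin n) (t : Fin n → ℝ) (B : (Fin n → ℤ) → ℝ) (kb : ℕ) (κ : ℝ) : ℝ → ℝ :=
  fun q =>
    (cfk v lam S hnd j t (mrc B (Vc v hnd j)) kb - κ * cfk v lam S hnd j t B kb)
      * Pk v lam S hnd j t c 1 q
    + (Pk v lam S hnd j t (mrc B (Vc v hnd j)) (kb+1) q - κ * Pk v lam S hnd j t B (kb+1) q)
      * Pk v lam S hnd j t c 0 q
    - cfk v lam S hnd j t (mrc c (Vc v hnd j)) 0 * Pk v lam S hnd j t B (kb+1) q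
    - Pk v lam S hnd j t (mrc c (Vc v hnd j)) 1 q * Pk v lam S hnd j t B kb q

lemma MA_cont (j : Fin n) (t : Fin n → ℝ) (B : (Fin n → ℤ) → ℝ) (kb : ℕ) (κ : ℝ) :
    Continuous (MA v lam S c hnd j t B kb κ) := by
  unfold MA
  exact (((continuous_const.mul (Pk_cont v lam S hnd j t c 1)).add
    (((Pk_cont v lam S hnd j t _ (kb+1)).sub
      (continuous_const.mul (Pk_cont v lam S hnd j t B (kb+1)))).mul
        (Pk_cont v lam S hnd j t c 0))).sub
    (continuous_const.mul (Pk_cont v lam S hnd j t B (kb+1)))).sub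
    ((Pk_cont v lam S hnd j t _ 1).mul (Pk_cont v lam S hnd j t B kb))

lemma hconstA (hSnn : ∀ u ∈ S, ∀ i : Fin d, 0 ≤ lfun v lam i u)
    (j : Fin n) (t : Fin n → ℝ) (B : (Fin n → ℤ) → ℝ) (kb : ℕ) :
    (cfk v lam S hnd j t (mrc B (Vc v hnd j)) kb
        - (2*(kb : ℝ)) * cfk v lam S hnd j t B kb) * cfk v lam S hnd j t c 0
      - cfk v lam S hnd j t (mrc c (Vc v hnd j)) 0 * cfk v lam S hnd j t B kb = 0 := by
  unfold cfk
  rw [cf_mrc v lam S hnd j t B kb hSnn, cf_mrc v lam S hnd j t c 0 hSnn]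
  push_cast
  ring

lemma NumA_eq (j : Fin n) (t : Fin n → ℝ) (B : (Fin n → ℤ) → ℝ) (kb : ℕ) (κ : ℝ)
    (hconst : (cfk v lam S hnd j t (mrc B (Vc v hnd j)) kb - κ * cfk v lam S hnd j t B kb)
        * cfk v lam S hnd j t c 0
      - cfk v lam S hnd j t (mrc c (Vc v hnd j)) 0 * cfk v lam S hnd j t B kb = 0)
    (q : ℝ) :
    (Pk v lam S hnd j t (mrc B (Vc v hnd j)) kb q - κ * Pk v lam S hnd j t B kb q)
        * Pk v lam S hnd j t c 0 q
      - Pk v lam S hnd j t (mrc c (Vc v hnd j)) 0 q * Pk v lam S hnd j t B kb q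
      = q * MA v lam S c hnd j t B kb κ q := by
  unfold MA
  rw [Pk_shift v lam S hnd j t (mrc B (Vc v hnd j)) kb q, Pk_shift v lam S hnd j t B kb q,
    Pk_shift v lam S hnd j t c 0 q, Pk_shift v lam S hnd j t (mrc c (Vc v hnd j)) 0 q]
  linear_combination hconst

lemma Pk_pos (j : Fin n) (t : Fin n → ℝ) (b : (Fin n → ℤ) → ℝ) (kb : ℕ)
    (hbnn : ∀ u ∈ S, 0 ≤ wt v lam hnd j t b u)
    (hex : ∃ u ∈ S, 0 < wt v lam hnd j t b u ∧ kb ≤ eN v lam hnd j u)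
    {q : ℝ} (hq : 0 < q) : 0 < Pk v lam S hnd j t b kb q := by
  apply PP_pos' S hq
  · intro u hu
    unfold bk
    split
    · exact le_refl 0
    · exact hbnn u hu
  · obtain ⟨u, hu, h1, h2⟩ := hex
    refine ⟨u, hu, ?_⟩
    unfold bk
    rw [if_neg (by omega)]
    exact h1

lemma tendsto_MA (j : Fin n) (t : Fin n → ℝ) (B : (Fin n → ℤ) → ℝ) (kb : ℕ) (κ : ℝ) :
    Tendsto (fun s : ℝ => MA v lam S c hnd j t B kb κ (Real.exp (2*s))) atBot
      (nhds (MA v lam S c hnd j t B kb κ 0)) :=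
  ((MA_cont v lam S c hnd j t B kb κ).tendsto 0).comp (tendsto_q)

lemma tendsto_M2Q (j : Fin n) (t : Fin n → ℝ) (b : (Fin n → ℤ) → ℝ) (w₁ w₂ : Fin n → ℝ)
    (k : ℕ) :
    Tendsto (fun s : ℝ => M2 v lam S hnd j t b w₁ w₂ k (Real.exp (2*s))) atBot
      (nhds (M2 v lam S hnd j t b w₁ w₂ k 0)) :=
  ((M2_cont v lam S hnd j t b w₁ w₂ k).tendsto 0).comp (tendsto_q)

/-- The common value of the limits in part (1), per summand. -/
lemma limit_eq (hSnn : ∀ u ∈ S, ∀ i : Fin d, 0 ≤ lfun v lam i u)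
    (j : Fin n) (t : Fin n → ℝ) (B : (Fin n → ℤ) → ℝ) (kb : ℕ)
    (hX : cfk v lam S hnd j t B kb ≠ 0) (hx₀ : cfk v lam S hnd j t c 0 ≠ 0) (A : ℝ) :
    -A * MA v lam S c hnd j t B kb (2*(kb : ℝ)) 0
        / (cfk v lam S hnd j t B kb * cfk v lam S hnd j t c 0)
      = -A/2 * (M2 v lam S hnd j t B (Vc v hnd j) (Vc v hnd j) kb 0
          / (cfk v lam S hnd j t B kb)^2
        - M2 v lam S hnd j t c (Vc v hnd j) (Vc v hnd j) 0 0
          / (cfk v lam S hnd j t c 0)^2) := by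
  unfold MA M2
  rw [Pk_zero, Pk_zero, Pk_zero, Pk_zero, Pk_zero, Pk_zero, Pk_zero, Pk_zero, Pk_zero,
    Pk_zero]
  have hm1 : mrc (mrc B (Vc v hnd j)) (Vc v hnd j) = mrc (mrc B (Vc v hnd j)) (Vc v hnd j) := rfl
  unfold cfk
  rw [cf_mrc v lam S hnd j t (mrc B (Vc v hnd j)) kb hSnn,
    cf_mrc v lam S hnd j t (mrc B (Vc v hnd j)) (kb+1) hSnn,
    cf_mrc v lam S hnd j t (mrc c (Vc v hnd j)) 0 hSnn,
    cf_mrc v lam S hnd j t (mrc c (Vc v hnd j)) 1 hSnn,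
    cf_mrc v lam S hnd j t B kb hSnn, cf_mrc v lam S hnd j t B (kb+1) hSnn,
    cf_mrc v lam S hnd j t c 0 hSnn, cf_mrc v lam S hnd j t c 1 hSnn]
  unfold cfk at hX hx₀
  push_cast
  field_simp
  ring


lemma scalarA (E q X Y Z W MAv A κ T : ℝ) (hY : Y ≠ 0) (hW : W ≠ 0) (hEq : E * q = 1)
    (hNum : (X - κ * Y) * W - Z * Y = q * MAv) (hT : T = A * κ / 2) :
    2 * E * ((-A/2) * (X/Y - Z/W) + T) = -A * MAv / (Y * W) := by
  have h1 : 2 * E * ((-A/2) * (X/Y - Z/W) + T)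
      = 2 * E * (-A/2) * (((X - κ*Y)*W - Z*Y)/(Y*W)) := by
    rw [hT]
    field_simp
    ring
  rw [h1, hNum, show 2 * E * (-A/2) * (q * MAv/(Y*W)) = (E*q) * (-A * MAv/(Y*W)) from by
    ring, hEq, one_mul]

lemma scalarB (E q M1 M2 Y W A : ℝ) (hEq : E * q = 1) :
    E * ((-A/2) * ((q*M1)/Y^2 - (q*M2)/W^2)) = -A/2 * (M1/Y^2 - M2/W^2) := by
  rw [show E * ((-A/2) * ((q*M1)/Y^2 - (q*M2)/W^2))
      = (E*q) * (-A/2 * (M1/Y^2 - M2/W^2)) from by ring, hEq, one_mul]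

lemma part1 (hc : ∀ u ∈ S, 0 ≤ c u)
    (hSnn : ∀ u ∈ S, ∀ i : Fin d, 0 ≤ lfun v lam i u)
    (hpos : ∀ i x, 0 < Phi S (cl v lam c i) x) (hpos0 : ∀ x, 0 < Phi S c x)
    (hclex : ∀ i : Fin d, ∃ u ∈ S, 0 < cl v lam c i u)
    (u₀ : Fin n → ℤ) (hu₀S : u₀ ∈ S) (hu₀c : 0 < c u₀)
    (hu₀l : ∀ j : Fin n, lfun v lam (Fin.castLE hnd j) u₀ = 0)
    (hu₀i : ∀ i : Fin d, n ≤ (i : ℕ) → 1 ≤ lfun v lam i u₀)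
    (uk : Fin n → (Fin n → ℤ)) (hukS : ∀ m, uk m ∈ S) (hukc : ∀ m, 0 < c (uk m))
    (hukl : ∀ m, lfun v lam (Fin.castLE hnd m) (uk m) = 1)
    (hukl0 : ∀ m m' : Fin n, m' ≠ m → lfun v lam (Fin.castLE hnd m') (uk m) = 0)
    (j : Fin n) (t : Fin n → ℝ) :
    ∃ L : ℝ,
      Tendsto (fun s : ℝ => 2 * Real.exp (-2 * s) *
        (pd1 (gzero v lam S c a) (xi (fun m p => (v (Fin.castLE hnd m) p : ℝ))
          (Function.update t j s)) (Vc v hnd j) + (a (Fin.castLE hnd j) : ℝ)))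
        atBot (nhds L) ∧
      Tendsto (fun s : ℝ => Real.exp (-2 * s) *
        pd2 (gzero v lam S c a) (xi (fun m p => (v (Fin.castLE hnd m) p : ℝ))
          (Function.update t j s)) (Vc v hnd j) (Vc v hnd j)) atBot (nhds L) := by
  classical
  have hx₀ : 0 < cfk v lam S hnd j t c 0 :=
    cfk_c_pos v lam S c hnd hc u₀ hu₀S hu₀c hu₀l j t
  have hfacj : ∀ u ∈ S, eN v lam hnd j u = 0 → cl v lam c (Fin.castLE hnd j) u = 0 :=
    cl_vanish v lam S c hnd j (Fin.castLE hnd j) rfl hSnn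
  -- the level function
  set kb : Fin d → ℕ := fun i => if i = Fin.castLE hnd j then 1 else 0 with hkb
  have hX : ∀ i : Fin d, 0 < cfk v lam S hnd j t (cl v lam c i) (kb i) := by
    intro i
    by_cases hi : i = Fin.castLE hnd j
    · rw [hkb]
      simp only [if_pos hi]
      rw [hi]
      exact cfk_clj_pos v lam S c hnd hc hSnn uk hukS hukc hukl j t
    · rw [hkb]
      simp only [if_neg hi]
      exact cfk_cl_pos v lam S c hnd hc hSnn u₀ hu₀S hu₀c hu₀l hu₀i uk hukS hukc hukl
        hukl0 i j hi t
  have hPc : ∀ s : ℝ, 0 < Pk v lam S hnd j t c 0 (Real.exp (2*s)) := fun s =>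
    Pk_pos v lam S hnd j t c 0 (wt_c_nonneg v lam S c hnd hc j t)
      ⟨u₀, hu₀S, mul_pos hu₀c (Real.exp_pos _), Nat.zero_le _⟩ (Real.exp_pos _)
  have hPB : ∀ i : Fin d, ∀ s : ℝ,
      0 < Pk v lam S hnd j t (cl v lam c i) (kb i) (Real.exp (2*s)) := by
    intro i s
    apply Pk_pos v lam S hnd j t _ _ (wt_cl_nonneg v lam S c hnd hc hSnn i j t) _
      (Real.exp_pos _)
    by_cases hi : i = Fin.castLE hnd j
    · refine ⟨uk j, hukS j, ?_, ?_⟩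
      · unfold wt cl
        rw [hi, hukl j]
        simpa using mul_pos (hukc j) (Real.exp_pos _)
      · rw [hkb]
        simp only [if_pos hi]
        have : eN v lam hnd j (uk j) = 1 := eN_of_lfun v lam hnd (by rw [hukl j]; rfl)
        omega
    · obtain ⟨u, hu, hcu⟩ := hclex i
      refine ⟨u, hu, mul_pos hcu (Real.exp_pos _), ?_⟩
      rw [hkb]
      simp only [if_neg hi]
      exact Nat.zero_le _
  have he : ∀ s : ℝ, Real.exp (-(2*s)) * Real.exp (2*s) = 1 := by
    intro s
    rw [← Real.exp_add]
    norm_num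
  have hqne : ∀ s : ℝ, Real.exp (2*s) ≠ 0 := fun s => (Real.exp_pos _).ne'
  -- A-side pointwise identity
  have hfunA : ∀ s : ℝ, 2 * Real.exp (-2 * s) *
      (pd1 (gzero v lam S c a) (xi (fun m p => (v (Fin.castLE hnd m) p : ℝ))
        (Function.update t j s)) (Vc v hnd j) + (a (Fin.castLE hnd j) : ℝ))
      = ∑ i : Fin d, -(a i : ℝ) * MA v lam S c hnd j t (cl v lam c i) (kb i)
          (2 * (kb i : ℝ)) (Real.exp (2*s))
        / (Pk v lam S hnd j t (cl v lam c i) (kb i) (Real.exp (2*s))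
          * Pk v lam S hnd j t c 0 (Real.exp (2*s))) := by
    intro s
    rw [pd1_curve v lam S c a hnd hpos hpos0 hSnn j t (Vc v hnd j) s]
    have hsum : (∑ i : Fin d, if i = Fin.castLE hnd j then (a i : ℝ) else 0)
        = (a (Fin.castLE hnd j) : ℝ) := by simp
    rw [← hsum, ← Finset.sum_add_distrib, show (-2 : ℝ) * s = -(2*s) from by ring]
    rw [Finset.mul_sum]
    refine Finset.sum_congr rfl fun i _ => ?_
    have hNum := NumA_eq v lam S c hnd j t (cl v lam c i) (kb i) (2 * (kb i : ℝ))
      (hconstA v lam S c hnd hSnn j t (cl v lam c i) (kb i)) (Real.exp (2*s))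
    by_cases hi : i = Fin.castLE hnd j
    · have hfi : ∀ u ∈ S, eN v lam hnd j u = 0 → cl v lam c i u = 0 := by
        rw [hi]; exact hfacj
      rw [if_pos hi]
      unfold Rat1
      rw [Pk_factor v lam S hnd j t _ (mrc_vanish v lam S hnd hfi (Vc v hnd j)),
        Pk_factor v lam S hnd j t _ hfi,
        mul_div_mul_left _ _ (hqne s)]
      have hkbi : kb i = 1 := by rw [hkb]; simp only [if_pos hi]
      rw [hkbi] at hNum ⊢
      exact scalarA (Real.exp (-(2*s))) (Real.exp (2*s)) _ _ _ _ _ (a i : ℝ) _ _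
        (by
          have h1 := hPB i s
          rw [hkbi] at h1
          exact h1.ne') (hPc s).ne' (he s) hNum (by norm_num)
    · rw [if_neg hi]
      unfold Rat1
      have hkbi : kb i = 0 := by rw [hkb]; simp only [if_neg hi]
      rw [hkbi] at hNum ⊢
      exact scalarA (Real.exp (-(2*s))) (Real.exp (2*s)) _ _ _ _ _ (a i : ℝ) _ _
        (by
          have h1 := hPB i s
          rw [hkbi] at h1
          exact h1.ne') (hPc s).ne' (he s) hNum (by norm_num)
  -- B-side pointwise identity
  have hfunB : ∀ s : ℝ, Real.exp (-2 * s) *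
      pd2 (gzero v lam S c a) (xi (fun m p => (v (Fin.castLE hnd m) p : ℝ))
        (Function.update t j s)) (Vc v hnd j) (Vc v hnd j)
      = ∑ i : Fin d, -(a i : ℝ)/2 *
          (M2 v lam S hnd j t (cl v lam c i) (Vc v hnd j) (Vc v hnd j) (kb i)
            (Real.exp (2*s))
            / (Pk v lam S hnd j t (cl v lam c i) (kb i) (Real.exp (2*s)))^2
          - M2 v lam S hnd j t c (Vc v hnd j) (Vc v hnd j) 0 (Real.exp (2*s))
            / (Pk v lam S hnd j t c 0 (Real.exp (2*s)))^2) := by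
    intro s
    rw [pd2_curve v lam S c a hnd hpos hpos0 hSnn j t (Vc v hnd j) (Vc v hnd j) s,
      show (-2 : ℝ) * s = -(2*s) from by ring, Finset.mul_sum]
    refine Finset.sum_congr rfl fun i _ => ?_
    have hRc : Rat2 v lam S hnd j t c (Vc v hnd j) (Vc v hnd j) 0 (Real.exp (2*s))
        = (Real.exp (2*s) * M2 v lam S hnd j t c (Vc v hnd j) (Vc v hnd j) 0
            (Real.exp (2*s)))
          / (Pk v lam S hnd j t c 0 (Real.exp (2*s)))^2 := by
      unfold Rat2
      rw [N2_eq v lam S hnd j t c (Vc v hnd j) (Vc v hnd j) 0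
        (cfN2_const v lam S hnd hSnn j t c (Vc v hnd j) 0) (Real.exp (2*s))]
    by_cases hi : i = Fin.castLE hnd j
    · have hkbi : kb i = 1 := by rw [hkb]; simp only [if_pos hi]
      have hfi : ∀ u ∈ S, eN v lam hnd j u = 0 → cl v lam c i u = 0 := by
        rw [hi]; exact hfacj
      rw [Rat2_shift v lam S hnd j t (cl v lam c i) (Vc v hnd j) (Vc v hnd j)
        hfi (hqne s)]
      have hRi : Rat2 v lam S hnd j t (cl v lam c i) (Vc v hnd j) (Vc v hnd j) 1
          (Real.exp (2*s))
          = (Real.exp (2*s) * M2 v lam S hnd j t (cl v lam c i) (Vc v hnd j)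
              (Vc v hnd j) 1 (Real.exp (2*s)))
            / (Pk v lam S hnd j t (cl v lam c i) 1 (Real.exp (2*s)))^2 := by
        unfold Rat2
        rw [N2_eq v lam S hnd j t (cl v lam c i) (Vc v hnd j) (Vc v hnd j) 1
          (cfN2_const v lam S hnd hSnn j t (cl v lam c i) (Vc v hnd j) 1)
          (Real.exp (2*s))]
      rw [hRi, hRc, hkbi]
      exact scalarB (Real.exp (-(2*s))) (Real.exp (2*s)) _ _ _ _ (a i : ℝ) (he s)
    · have hkbi : kb i = 0 := by rw [hkb]; simp only [if_neg hi]
      have hRi : Rat2 v lam S hnd j t (cl v lam c i) (Vc v hnd j) (Vc v hnd j) 0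
          (Real.exp (2*s))
          = (Real.exp (2*s) * M2 v lam S hnd j t (cl v lam c i) (Vc v hnd j)
              (Vc v hnd j) 0 (Real.exp (2*s)))
            / (Pk v lam S hnd j t (cl v lam c i) 0 (Real.exp (2*s)))^2 := by
        unfold Rat2
        rw [N2_eq v lam S hnd j t (cl v lam c i) (Vc v hnd j) (Vc v hnd j) 0
          (cfN2_const v lam S hnd hSnn j t (cl v lam c i) (Vc v hnd j) 0)
          (Real.exp (2*s))]
      rw [hRi, hRc, hkbi]
      exact scalarB (Real.exp (-(2*s))) (Real.exp (2*s)) _ _ _ _ (a i : ℝ) (he s)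
  -- limits
  refine ⟨∑ i : Fin d, -(a i : ℝ) * MA v lam S c hnd j t (cl v lam c i) (kb i)
      (2 * (kb i : ℝ)) 0
    / (cfk v lam S hnd j t (cl v lam c i) (kb i) * cfk v lam S hnd j t c 0), ?_, ?_⟩
  · rw [funext hfunA]
    apply tendsto_finset_sum
    intro i _
    exact ((tendsto_MA v lam S c hnd j t (cl v lam c i) (kb i)
        (2 * (kb i : ℝ))).const_mul (-(a i : ℝ))).div
      ((tendsto_PkQ v lam S hnd j t (cl v lam c i) (kb i)).mul
        (tendsto_PkQ v lam S hnd j t c 0))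
      (mul_ne_zero (hX i).ne' hx₀.ne')
  · rw [funext hfunB]
    apply tendsto_finset_sum
    intro i _
    have hB : Tendsto (fun s : ℝ => -(a i : ℝ)/2 *
        (M2 v lam S hnd j t (cl v lam c i) (Vc v hnd j) (Vc v hnd j) (kb i)
          (Real.exp (2*s))
          / (Pk v lam S hnd j t (cl v lam c i) (kb i) (Real.exp (2*s)))^2
        - M2 v lam S hnd j t c (Vc v hnd j) (Vc v hnd j) 0 (Real.exp (2*s))
          / (Pk v lam S hnd j t c 0 (Real.exp (2*s)))^2)) atBot
        (nhds (-(a i : ℝ)/2 *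
          (M2 v lam S hnd j t (cl v lam c i) (Vc v hnd j) (Vc v hnd j) (kb i) 0
            / (cfk v lam S hnd j t (cl v lam c i) (kb i))^2
          - M2 v lam S hnd j t c (Vc v hnd j) (Vc v hnd j) 0 0
            / (cfk v lam S hnd j t c 0)^2))) := by
      apply Tendsto.const_mul
      exact ((tendsto_M2Q v lam S hnd j t (cl v lam c i) (Vc v hnd j) (Vc v hnd j)
          (kb i)).div ((tendsto_PkQ v lam S hnd j t (cl v lam c i) (kb i)).pow 2)
          (pow_ne_zero 2 (hX i).ne')).sub
        ((tendsto_M2Q v lam S hnd j t c (Vc v hnd j) (Vc v hnd j) 0).div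
          ((tendsto_PkQ v lam S hnd j t c 0).pow 2) (pow_ne_zero 2 hx₀.ne'))
    have heq := limit_eq v lam S c hnd hSnn j t (cl v lam c i) (kb i) (hX i).ne'
      hx₀.ne' (a i : ℝ)
    rw [← heq] at hB
    exact hB

end Curve2

lemma pd2_symm (hpos : ∀ i x, 0 < Phi S (cl v lam c i) x) (hpos0 : ∀ x, 0 < Phi S c x)
    (x w₁ w₂ : Fin n → ℝ) :
    pd2 (gzero v lam S c a) x w₁ w₂ = pd2 (gzero v lam S c a) x w₂ w₁ := by
  rw [pd2_gzero v lam S c a hpos hpos0 x w₁ w₂, pd2_gzero v lam S c a hpos hpos0 x w₂ w₁]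
  refine Finset.sum_congr rfl fun i _ => ?_
  rw [mrc_comm (cl v lam c i) w₁ w₂, mrc_comm c w₁ w₂]
  ring

end GGrowth

open GGrowth in
/-- Lemma 1 of the paper: the Guillemin potential `g₀` satisfies the growth
condition (∗) with data `(v₁,…,vₙ; a₁,…,aₙ)`. -/
theorem gzero_satisfies_growth_condition (n d : ℕ) (hnd : n ≤ d)
    (v : Fin d → Fin n → ℤ) (lam : Fin d → ℤ)
    (S : Finset (Fin n → ℤ))
    (hS : ∀ u : Fin n → ℤ, u ∈ S ↔ ∀ i : Fin d, 0 ≤ lfun v lam i u)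
    (hbdd : Bornology.IsBounded {x : Fin n → ℝ | ∀ i : Fin d, 0 ≤ lfunR v lam i x})
    (c : (Fin n → ℤ) → ℝ) (hc : ∀ u ∈ S, 0 ≤ c u)
    (hbasis : IsUnit (Matrix.of fun j k : Fin n => v (Fin.castLE hnd j) k).det)
    (hu0 : ∃ u₀ ∈ S, 0 < c u₀ ∧
      (∀ j : Fin n, lfun v lam (Fin.castLE hnd j) u₀ = 0) ∧
      (∀ i : Fin d, n ≤ (i : ℕ) → 1 ≤ lfun v lam i u₀))
    (huk : ∀ k : Fin n, ∃ u ∈ S, 0 < c u ∧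
      lfun v lam (Fin.castLE hnd k) u = 1 ∧
      (∀ j : Fin n, j ≠ k → lfun v lam (Fin.castLE hnd j) u = 0))
    (a : Fin d → ℤ) :
    GrowthCondition (fun j p => (v (Fin.castLE hnd j) p : ℝ))
      (fun j => (a (Fin.castLE hnd j) : ℝ)) (gzero v lam S c a) := by
  obtain ⟨u₀, hu₀S, hu₀c, hu₀l, hu₀i⟩ := hu0
  choose uk hukS hukc hukl hukl0 using huk
  have hukl0' : ∀ m m' : Fin n, m' ≠ m → lfun v lam (Fin.castLE hnd m') (uk m) = 0 :=
    fun m m' h => hukl0 m m' h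
  have hSnn : ∀ u ∈ S, ∀ i : Fin d, 0 ≤ lfun v lam i u := fun u hu i => ((hS u).mp hu) i
  have hclnn : ∀ i : Fin d, ∀ u ∈ S, 0 ≤ cl v lam c i u := by
    intro i u hu
    exact mul_nonneg (hc u hu) (by exact_mod_cast hSnn u hu i)
  have hclex : ∀ i : Fin d, ∃ u ∈ S, 0 < cl v lam c i u := by
    intro i
    by_cases hin : (i : ℕ) < n
    · have hcast : Fin.castLE hnd ⟨(i : ℕ), hin⟩ = i := by apply Fin.ext; rfl
      refine ⟨uk ⟨(i : ℕ), hin⟩, hukS _, ?_⟩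
      have h1 := hukl ⟨(i : ℕ), hin⟩
      rw [hcast] at h1
      unfold GGrowth.cl
      rw [h1]
      simpa using hukc ⟨(i : ℕ), hin⟩
    · refine ⟨u₀, hu₀S, ?_⟩
      unfold GGrowth.cl
      have h1 : (1 : ℝ) ≤ (lfun v lam i u₀ : ℝ) := by
        exact_mod_cast hu₀i i (le_of_not_gt hin)
      exact mul_pos hu₀c (lt_of_lt_of_le one_pos h1)
  have hpos : ∀ i x, 0 < Phi S (cl v lam c i) x := fun i x =>
    Phi_pos (hclnn i) (hclex i) x
  have hpos0 : ∀ x, 0 < Phi S c x := fun x => Phi_pos hc ⟨u₀, hu₀S, hu₀c⟩ x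
  refine ⟨?_, ?_, ?_⟩
  · intro j t
    exact part1 v lam S c hnd a hc hSnn hpos hpos0 hclex u₀ hu₀S hu₀c hu₀l hu₀i uk hukS
      hukc hukl hukl0' j t
  · intro j k l t
    exact part2 v lam S c hnd a hc hSnn hpos hpos0 u₀ hu₀S hu₀c hu₀l hu₀i uk hukS hukc
      hukl hukl0' j k l t
  · intro j k hjk t
    constructor
    · have h := part3 v lam S c hnd a hc hSnn hpos hpos0 u₀ hu₀S hu₀c hu₀l hu₀i uk hukS
        hukc hukl hukl0' j t (Vc v hnd k) (Real.exp (-(t k)))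
      apply h.congr
      intro s
      rw [show Real.exp (-s - t k) = Real.exp (-(t k)) * Real.exp (-s) from by
        rw [← Real.exp_add]; ring_nf]
      rfl
    · have h := part3 v lam S c hnd a hc hSnn hpos hpos0 u₀ hu₀S hu₀c hu₀l hu₀i uk hukS
        hukc hukl hukl0' k t (Vc v hnd j) (Real.exp (-(t j)))
      apply h.congr
      intro s
      rw [pd2_symm v lam S c a hpos hpos0 _ (Vc v hnd k) (Vc v hnd j)]
      rw [show Real.exp (-(t j) - s) = Real.exp (-(t j)) * Real.exp (-s) from by
        rw [← Real.exp_add]; ring_nf]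
      rfl
end
end

section
/- Under the hypotheses on (v₁,…,v_d; λ₁,…,λ_d; c; a) stated in the context, fix k ∈ {1,…,n} and fix t₁,…,t_{k−1},t_{k+1},…,tₙ ∈ ℝ, and set b_u = c_u·e^{2·Σ_{m∈{1,…,n}, m≠k} l_m(u)t_m} for u ∈ S. Then, as tₖ → −∞, the function e^{−2tₖ}·(⟨∇g₀(ξ(t)), vₖ⟩ + aₖ) converges to the value (Σᵢ₌₁^d aᵢ)·(Σ_{u∈S, lₖ(u)=1} b_u)/(Σ_{u∈S, lₖ(u)=0} b_u) − Σ_{i∈{1,…,d}, i≠k} aᵢ·(Σ_{u∈S, lₖ(u)=1, lᵢ(u)≥1} lᵢ(u)b_u)/(Σ_{u∈S, lₖ(u)=0, lᵢ(u)≥1} lᵢ(u)b_u) − 2aₖ·(Σ_{u∈S, lₖ(u)=2} b_u)/(Σ_{u∈S, lₖ(u)=1} b_u). -/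
open Filter

noncomputable section

/-- `b_u = c_u e^{2 Σ_{m ≠ k} l_m(u) t_m}` (the coordinates `t_m`, `m ≠ k`, being fixed). -/
def bcoef {n d : ℕ} (v : Fin d → Fin n → ℤ) (lam : Fin d → ℤ) (hnd : n ≤ d)
    (c : (Fin n → ℤ) → ℝ) (k : Fin n) (t : Fin n → ℝ) (u : Fin n → ℤ) : ℝ :=
  c u * Real.exp (2 * ∑ m ∈ Finset.univ.erase k,
    (lfun v lam (Fin.castLE hnd m) u : ℝ) * t m)

/-- The limiting value
`(Σᵢ aᵢ)·(Σ_{lₖ(u)=1} b_u)/(Σ_{lₖ(u)=0} b_u)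
  − Σ_{i≠k} aᵢ·(Σ_{lₖ(u)=1, lᵢ(u)≥1} lᵢ(u)b_u)/(Σ_{lₖ(u)=0, lᵢ(u)≥1} lᵢ(u)b_u)
  − 2aₖ·(Σ_{lₖ(u)=2} b_u)/(Σ_{lₖ(u)=1} b_u)`. -/
def limitValue {n d : ℕ} (v : Fin d → Fin n → ℤ) (lam : Fin d → ℤ) (hnd : n ≤ d)
    (S : Finset (Fin n → ℤ)) (c : (Fin n → ℤ) → ℝ) (a : Fin d → ℤ)
    (k : Fin n) (t : Fin n → ℝ) : ℝ :=
  (∑ i : Fin d, (a i : ℝ)) *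
      ((∑ u ∈ S.filter (fun u => lfun v lam (Fin.castLE hnd k) u = 1),
          bcoef v lam hnd c k t u) /
        (∑ u ∈ S.filter (fun u => lfun v lam (Fin.castLE hnd k) u = 0),
          bcoef v lam hnd c k t u)) -
    (∑ i ∈ Finset.univ.erase (Fin.castLE hnd k), (a i : ℝ) *
      ((∑ u ∈ S.filter (fun u =>
            lfun v lam (Fin.castLE hnd k) u = 1 ∧ 1 ≤ lfun v lam i u),
          (lfun v lam i u : ℝ) * bcoef v lam hnd c k t u) /
        (∑ u ∈ S.filter (fun u =>
            lfun v lam (Fin.castLE hnd k) u = 0 ∧ 1 ≤ lfun v lam i u),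
          (lfun v lam i u : ℝ) * bcoef v lam hnd c k t u))) -
    2 * (a (Fin.castLE hnd k) : ℝ) *
      ((∑ u ∈ S.filter (fun u => lfun v lam (Fin.castLE hnd k) u = 2),
          bcoef v lam hnd c k t u) /
        (∑ u ∈ S.filter (fun u => lfun v lam (Fin.castLE hnd k) u = 1),
          bcoef v lam hnd c k t u))


/-! ### Auxiliary machinery -/

section AuxGzero

variable {n d : ℕ} (v : Fin d → Fin n → ℤ) (lam : Fin d → ℤ) (hnd : n ≤ d)
  (S : Finset (Fin n → ℤ)) (c : (Fin n → ℤ) → ℝ) (k : Fin n) (t : Fin n → ℝ)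

def linCLM (u : Fin n → ℤ) : (Fin n → ℝ) →L[ℝ] ℝ :=
  ∑ m, (u m : ℝ) • ContinuousLinearMap.proj m

lemma linCLM_apply (u : Fin n → ℤ) (x : Fin n → ℝ) :
    linCLM u x = ∑ m, (u m : ℝ) * x m := by
  simp [linCLM, ContinuousLinearMap.sum_apply]

lemma hasFDerivAt_expsum (f : (Fin n → ℤ) → ℝ) (ξ : Fin n → ℝ) :
    HasFDerivAt (fun x => ∑ u ∈ S, f u * Real.exp (2 * ∑ m, (u m : ℝ) * x m))
      (∑ u ∈ S, (f u * Real.exp (2 * ∑ m, (u m : ℝ) * ξ m) * 2) • linCLM u) ξ := by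
  apply HasFDerivAt.fun_sum
  intro u _
  have h1 : HasFDerivAt (fun x : Fin n → ℝ => 2 * ∑ m, (u m : ℝ) * x m)
      ((2 : ℝ) • linCLM u) ξ := by
    have := (linCLM u).hasFDerivAt (x := ξ)
    simpa [linCLM_apply] using this.const_mul 2
  have h2 := (h1.exp).const_mul (f u)
  have h3 : (f u * Real.exp (2 * ∑ m, (u m : ℝ) * ξ m) * 2) • linCLM u
      = f u • Real.exp (2 * ∑ m, (u m : ℝ) * ξ m) • (2 : ℝ) • linCLM u := by
    rw [smul_smul, smul_smul]
  rw [h3]; exact h2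

lemma pd1_gzero (a : Fin d → ℤ)
    (hN : ∀ (i : Fin d) (ξ : Fin n → ℝ),
      0 < ∑ u ∈ S, c u * (lfun v lam i u : ℝ) * Real.exp (2 * ∑ m, (u m : ℝ) * ξ m))
    (hD : ∀ ξ : Fin n → ℝ, 0 < ∑ u ∈ S, c u * Real.exp (2 * ∑ m, (u m : ℝ) * ξ m))
    (ξ w : Fin n → ℝ) :
    fderiv ℝ (gzero v lam S c a) ξ w =
      -(1/2) * ∑ i : Fin d, (a i : ℝ) *
        ((∑ u ∈ S, c u * (lfun v lam i u : ℝ) * Real.exp (2 * ∑ m, (u m : ℝ) * ξ m) *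
            (2 * ∑ m, (u m : ℝ) * w m)) /
          (∑ u ∈ S, c u * (lfun v lam i u : ℝ) * Real.exp (2 * ∑ m, (u m : ℝ) * ξ m)) -
         (∑ u ∈ S, c u * Real.exp (2 * ∑ m, (u m : ℝ) * ξ m) * (2 * ∑ m, (u m : ℝ) * w m)) /
          (∑ u ∈ S, c u * Real.exp (2 * ∑ m, (u m : ℝ) * ξ m))) := by
  have hEq : gzero v lam S c a = fun x => -(1/2) * ∑ i : Fin d, (a i : ℝ) *
      (Real.log (∑ u ∈ S, c u * (lfun v lam i u : ℝ) * Real.exp (2 * ∑ m, (u m : ℝ) * x m)) -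
       Real.log (∑ u ∈ S, c u * Real.exp (2 * ∑ m, (u m : ℝ) * x m))) := by
    funext x
    unfold gzero
    congr 1
    apply Finset.sum_congr rfl
    intro i _
    rw [Real.log_div (hN i x).ne' (hD x).ne']
  have hDd := hasFDerivAt_expsum S c ξ
  have hNd : ∀ i : Fin d, HasFDerivAt
      (fun x => ∑ u ∈ S, c u * (lfun v lam i u : ℝ) * Real.exp (2 * ∑ m, (u m : ℝ) * x m))
      (∑ u ∈ S, (c u * (lfun v lam i u : ℝ) * Real.exp (2 * ∑ m, (u m : ℝ) * ξ m) * 2) • linCLM u) ξ :=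
    fun i => hasFDerivAt_expsum S (fun u => c u * (lfun v lam i u : ℝ)) ξ
  have h : HasFDerivAt (gzero v lam S c a)
      ((-(1/2) : ℝ) • ∑ i : Fin d, (a i : ℝ) •
        (((∑ u ∈ S, c u * (lfun v lam i u : ℝ) * Real.exp (2 * ∑ m, (u m : ℝ) * ξ m))⁻¹ •
            (∑ u ∈ S, (c u * (lfun v lam i u : ℝ) * Real.exp (2 * ∑ m, (u m : ℝ) * ξ m) * 2) • linCLM u)) -
         ((∑ u ∈ S, c u * Real.exp (2 * ∑ m, (u m : ℝ) * ξ m))⁻¹ •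
            (∑ u ∈ S, (c u * Real.exp (2 * ∑ m, (u m : ℝ) * ξ m) * 2) • linCLM u)))) ξ := by
    rw [hEq]
    exact (HasFDerivAt.fun_sum fun i _ =>
      (((hNd i).log (hN i ξ).ne').sub (hDd.log (hD ξ).ne')).const_mul ((a i : ℝ))).const_mul (-(1/2))
  rw [h.fderiv]
  simp only [ContinuousLinearMap.smul_apply, ContinuousLinearMap.sum_apply,
    ContinuousLinearMap.sub_apply, linCLM_apply, smul_eq_mul]
  congr 1
  apply Finset.sum_congr rfl
  intro i _
  rw [inv_mul_eq_div, inv_mul_eq_div]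
  congr 2 <;> (congr 1; apply Finset.sum_congr rfl; intro u _; ring)

lemma sum_mul_xi (t' : Fin n → ℝ) (u : Fin n → ℤ) :
    ∑ m, (u m : ℝ) * (xi (fun j p => (v (Fin.castLE hnd j) p : ℝ)) t') m
      = ∑ j, t' j * ((lfun v lam (Fin.castLE hnd j) u : ℝ) - (lam (Fin.castLE hnd j) : ℝ)) := by
  unfold xi lfun
  push_cast
  simp only [Finset.sum_apply, Pi.smul_apply, smul_eq_mul, add_sub_cancel_right]
  simp only [Finset.mul_sum]
  rw [Finset.sum_comm]
  apply Finset.sum_congr rfl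
  intro j _
  apply Finset.sum_congr rfl
  intro m _
  ring

lemma update_sum_split (sv : ℝ) (g : Fin n → ℝ) :
    ∑ j, Function.update t k sv j * g j = sv * g k + ∑ j ∈ Finset.univ.erase k, t j * g j := by
  have h : (fun j => Function.update t k sv j * g j)
      = Function.update (fun j => t j * g j) k (sv * g k) := by
    funext j
    rcases eq_or_ne j k with rfl | h
    · simp
    · simp [Function.update_of_ne h]
  rw [h, Finset.sum_update_of_mem (Finset.mem_univ k), Finset.erase_eq]

lemma cexp_eq (u : Fin n → ℤ) (s : ℝ) :
    c u * Real.exp (2 * ∑ m, (u m : ℝ) *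
        (xi (fun j p => (v (Fin.castLE hnd j) p : ℝ)) (Function.update t k s)) m)
      = Real.exp (-2 * ∑ j, Function.update t k s j * (lam (Fin.castLE hnd j) : ℝ)) *
        (bcoef v lam hnd c k t u * Real.exp (2 * (lfun v lam (Fin.castLE hnd k) u : ℝ) * s)) := by
  rw [sum_mul_xi v lam hnd _ u]
  unfold bcoef
  rw [show Real.exp (-2 * ∑ j, Function.update t k s j * (lam (Fin.castLE hnd j) : ℝ)) *
        (c u * Real.exp (2 * ∑ m ∈ Finset.univ.erase k,
          (lfun v lam (Fin.castLE hnd m) u : ℝ) * t m) *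
         Real.exp (2 * (lfun v lam (Fin.castLE hnd k) u : ℝ) * s))
      = c u * (Real.exp (-2 * ∑ j, Function.update t k s j * (lam (Fin.castLE hnd j) : ℝ)) *
          Real.exp (2 * ∑ m ∈ Finset.univ.erase k, (lfun v lam (Fin.castLE hnd m) u : ℝ) * t m) *
          Real.exp (2 * (lfun v lam (Fin.castLE hnd k) u : ℝ) * s)) from by ring,
    ← Real.exp_add, ← Real.exp_add]
  congr 1
  rw [update_sum_split k t s (fun j => (lfun v lam (Fin.castLE hnd j) u : ℝ) - (lam (Fin.castLE hnd j) : ℝ)),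
    update_sum_split k t s (fun j => (lam (Fin.castLE hnd j) : ℝ))]
  have e1 : ∑ j ∈ Finset.univ.erase k, t j *
        ((lfun v lam (Fin.castLE hnd j) u : ℝ) - (lam (Fin.castLE hnd j) : ℝ))
      = (∑ j ∈ Finset.univ.erase k, (lfun v lam (Fin.castLE hnd j) u : ℝ) * t j)
        - ∑ j ∈ Finset.univ.erase k, t j * (lam (Fin.castLE hnd j) : ℝ) := by
    rw [← Finset.sum_sub_distrib]
    apply Finset.sum_congr rfl
    intro j _
    ring
  rw [e1]
  ring

lemma tendsto_expsum (f : (Fin n → ℤ) → ℝ) (lk : (Fin n → ℤ) → ℤ) (N : ℕ)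
    (hf : ∀ u ∈ S, lk u < N → f u = 0) :
    Tendsto (fun s : ℝ => Real.exp (-(2 * N) * s) *
        ∑ u ∈ S, f u * Real.exp (2 * (lk u : ℝ) * s))
      atBot (nhds (∑ u ∈ S.filter (fun u => lk u = (N : ℤ)), f u)) := by
  have h1 : ∀ s : ℝ, Real.exp (-(2 * N) * s) * ∑ u ∈ S, f u * Real.exp (2 * (lk u : ℝ) * s)
      = ∑ u ∈ S, f u * Real.exp ((2 * ((lk u : ℝ) - N)) * s) := by
    intro s
    rw [Finset.mul_sum]
    apply Finset.sum_congr rfl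
    intro u _
    rw [show Real.exp (-(2 * N) * s) * (f u * Real.exp (2 * (lk u : ℝ) * s))
        = f u * (Real.exp (-(2 * N) * s) * Real.exp (2 * (lk u : ℝ) * s)) from by ring,
      ← Real.exp_add]
    congr 2
    ring
  rw [Finset.sum_filter]
  refine Tendsto.congr (fun s => (h1 s).symm) ?_
  apply tendsto_finset_sum
  intro u hu
  rcases lt_trichotomy (lk u) (N : ℤ) with h | h | h
  · have hfu := hf u hu h
    simp only [hfu, zero_mul]
    have : ¬ (lk u = (N : ℤ)) := by omega
    simp [this]
  · simp only [h, if_pos rfl]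
    have : ∀ s : ℝ, f u * Real.exp ((2 * (((N : ℤ) : ℝ) - N)) * s) = f u := by
      intro s; norm_num
    exact Tendsto.congr (fun s => (this s).symm) tendsto_const_nhds
  · have hne : ¬ (lk u = (N : ℤ)) := by omega
    simp only [if_neg hne]
    have hpos : (0 : ℝ) < 2 * ((lk u : ℝ) - N) := by
      have : (N : ℝ) < (lk u : ℝ) := by exact_mod_cast h
      linarith
    have := (Real.tendsto_exp_atBot.comp (tendsto_id.const_mul_atBot hpos)).const_mul (f u)
    simpa using this

lemma sum_rearrange {d' : ℕ} (kd : Fin d') (aR : Fin d' → ℝ) (x z : ℝ) (y : Fin d' → ℝ) :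
    (∑ i ∈ Finset.univ.erase kd, aR i * (x - y i)) + aR kd * (x - z)
      = (∑ i : Fin d', aR i) * x - (∑ i ∈ Finset.univ.erase kd, aR i * y i) - aR kd * z := by
  rw [← Finset.add_sum_erase Finset.univ aR (Finset.mem_univ kd)]
  rw [show (∑ i ∈ Finset.univ.erase kd, aR i * (x - y i))
      = ∑ i ∈ Finset.univ.erase kd, (aR i * x - aR i * y i) from
    Finset.sum_congr rfl fun i _ => by ring]
  rw [Finset.sum_sub_distrib, ← Finset.sum_mul]
  ring

/-- `w_u(s) = b_u e^{2 l_k(u) s}`. -/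
def wfun (u : Fin n → ℤ) (s : ℝ) : ℝ :=
  bcoef v lam hnd c k t u * Real.exp (2 * (lfun v lam (Fin.castLE hnd k) u : ℝ) * s)

def Pfun (i : Fin d) (s : ℝ) : ℝ :=
  ∑ u ∈ S, (lfun v lam i u : ℝ) * wfun v lam hnd c k t u s

def Qfun (s : ℝ) : ℝ :=
  ∑ u ∈ S, wfun v lam hnd c k t u s

def Afun (i : Fin d) (s : ℝ) : ℝ :=
  ∑ u ∈ S, (lfun v lam i u : ℝ) * (lfun v lam (Fin.castLE hnd k) u : ℝ) * wfun v lam hnd c k t u s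

def Rfun (s : ℝ) : ℝ :=
  ∑ u ∈ S, ((lfun v lam (Fin.castLE hnd k) u : ℝ) * (lfun v lam (Fin.castLE hnd k) u : ℝ) -
    (lfun v lam (Fin.castLE hnd k) u : ℝ)) * wfun v lam hnd c k t u s

def Hfun (a : Fin d → ℤ) (s : ℝ) : ℝ :=
  (∑ i ∈ Finset.univ.erase (Fin.castLE hnd k), (a i : ℝ) *
      ((Real.exp (-2 * s) * Pfun v lam hnd S c k t (Fin.castLE hnd k) s) / Qfun v lam hnd S c k t s -
       (Real.exp (-2 * s) * Afun v lam hnd S c k t i s) / Pfun v lam hnd S c k t i s))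
  + (a (Fin.castLE hnd k) : ℝ) *
      ((Real.exp (-2 * s) * Pfun v lam hnd S c k t (Fin.castLE hnd k) s) / Qfun v lam hnd S c k t s -
       (Real.exp (-(2 * 2) * s) * Rfun v lam hnd S c k t s) /
         (Real.exp (-2 * s) * Pfun v lam hnd S c k t (Fin.castLE hnd k) s))

lemma Hpt (a : Fin d → ℤ)
    (hN : ∀ (i : Fin d) (x : Fin n → ℝ),
      0 < ∑ u ∈ S, c u * (lfun v lam i u : ℝ) * Real.exp (2 * ∑ m, (u m : ℝ) * x m))
    (hD : ∀ x : Fin n → ℝ, 0 < ∑ u ∈ S, c u * Real.exp (2 * ∑ m, (u m : ℝ) * x m))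
    (hP : ∀ (i : Fin d) (s : ℝ), 0 < Pfun v lam hnd S c k t i s)
    (hQ : ∀ s : ℝ, 0 < Qfun v lam hnd S c k t s)
    (s : ℝ) :
    Real.exp (-2 * s) * (pd1 (gzero v lam S c a)
        (xi (fun j p => (v (Fin.castLE hnd j) p : ℝ)) (Function.update t k s))
        (fun p => (v (Fin.castLE hnd k) p : ℝ)) + (a (Fin.castLE hnd k) : ℝ))
      = Hfun v lam hnd S c k t a s := by
  have hJ : ∀ u : Fin n → ℤ,
      (∑ m, (u m : ℝ) * (v (Fin.castLE hnd k) m : ℝ))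
        = (lfun v lam (Fin.castLE hnd k) u : ℝ) - (lam (Fin.castLE hnd k) : ℝ) := by
    intro u; simp only [lfun]; push_cast; ring
  unfold pd1
  rw [pd1_gzero v lam S c a hN hD]
  set E := Real.exp (-2 * ∑ j, Function.update t k s j * (lam (Fin.castLE hnd j) : ℝ)) with hEdef
  have hEne : E ≠ 0 := by rw [hEdef]; exact (Real.exp_pos _).ne'
  have hw : ∀ u : Fin n → ℤ, c u * Real.exp (2 * ∑ m, (u m : ℝ) *
      (xi (fun j p => (v (Fin.castLE hnd j) p : ℝ)) (Function.update t k s)) m)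
      = E * wfun v lam hnd c k t u s := by
    intro u; rw [hEdef]; unfold wfun; exact cexp_eq v lam hnd c k t u s
  have h1 : ∀ i : Fin d, (∑ u ∈ S, c u * (lfun v lam i u : ℝ) * Real.exp (2 * ∑ m, (u m : ℝ) *
      (xi (fun j p => (v (Fin.castLE hnd j) p : ℝ)) (Function.update t k s)) m))
      = E * Pfun v lam hnd S c k t i s := by
    intro i
    unfold Pfun
    rw [Finset.mul_sum]
    refine Finset.sum_congr rfl fun u _ => ?_
    linear_combination (lfun v lam i u : ℝ) * hw u
  have h3 : (∑ u ∈ S, c u * Real.exp (2 * ∑ m, (u m : ℝ) *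
      (xi (fun j p => (v (Fin.castLE hnd j) p : ℝ)) (Function.update t k s)) m))
      = E * Qfun v lam hnd S c k t s := by
    unfold Qfun
    rw [Finset.mul_sum]
    refine Finset.sum_congr rfl fun u _ => ?_
    exact hw u
  have h2 : ∀ i : Fin d, (∑ u ∈ S, c u * (lfun v lam i u : ℝ) * Real.exp (2 * ∑ m, (u m : ℝ) *
      (xi (fun j p => (v (Fin.castLE hnd j) p : ℝ)) (Function.update t k s)) m) *
        (2 * ((lfun v lam (Fin.castLE hnd k) u : ℝ) - (lam (Fin.castLE hnd k) : ℝ))))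
      = E * (2 * Afun v lam hnd S c k t i s
          - 2 * (lam (Fin.castLE hnd k) : ℝ) * Pfun v lam hnd S c k t i s) := by
    intro i
    have step : ∀ u ∈ S, c u * (lfun v lam i u : ℝ) * Real.exp (2 * ∑ m, (u m : ℝ) *
        (xi (fun j p => (v (Fin.castLE hnd j) p : ℝ)) (Function.update t k s)) m) *
          (2 * ((lfun v lam (Fin.castLE hnd k) u : ℝ) - (lam (Fin.castLE hnd k) : ℝ)))
        = E * (2 * ((lfun v lam i u : ℝ) * (lfun v lam (Fin.castLE hnd k) u : ℝ) *
            wfun v lam hnd c k t u s))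
          - E * (2 * (lam (Fin.castLE hnd k) : ℝ) * ((lfun v lam i u : ℝ) *
            wfun v lam hnd c k t u s)) := by
      intro u _
      linear_combination ((lfun v lam i u : ℝ) *
        (2 * ((lfun v lam (Fin.castLE hnd k) u : ℝ) - (lam (Fin.castLE hnd k) : ℝ)))) * hw u
    rw [Finset.sum_congr rfl step, Finset.sum_sub_distrib, ← Finset.mul_sum, ← Finset.mul_sum,
      ← Finset.mul_sum, ← Finset.mul_sum]
    unfold Afun Pfun
    ring
  have h4 : (∑ u ∈ S, c u * Real.exp (2 * ∑ m, (u m : ℝ) *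
      (xi (fun j p => (v (Fin.castLE hnd j) p : ℝ)) (Function.update t k s)) m) *
        (2 * ((lfun v lam (Fin.castLE hnd k) u : ℝ) - (lam (Fin.castLE hnd k) : ℝ))))
      = E * (2 * Pfun v lam hnd S c k t (Fin.castLE hnd k) s
          - 2 * (lam (Fin.castLE hnd k) : ℝ) * Qfun v lam hnd S c k t s) := by
    have step : ∀ u ∈ S, c u * Real.exp (2 * ∑ m, (u m : ℝ) *
        (xi (fun j p => (v (Fin.castLE hnd j) p : ℝ)) (Function.update t k s)) m) *
          (2 * ((lfun v lam (Fin.castLE hnd k) u : ℝ) - (lam (Fin.castLE hnd k) : ℝ)))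
        = E * (2 * ((lfun v lam (Fin.castLE hnd k) u : ℝ) * wfun v lam hnd c k t u s))
          - E * (2 * (lam (Fin.castLE hnd k) : ℝ) * wfun v lam hnd c k t u s) := by
      intro u _
      linear_combination (2 * ((lfun v lam (Fin.castLE hnd k) u : ℝ) -
        (lam (Fin.castLE hnd k) : ℝ))) * hw u
    rw [Finset.sum_congr rfl step, Finset.sum_sub_distrib, ← Finset.mul_sum, ← Finset.mul_sum,
      ← Finset.mul_sum, ← Finset.mul_sum]
    unfold Pfun Qfun
    ring
  simp only [hJ]
  simp only [h1, h2, h3, h4]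
  simp only [mul_div_mul_left _ _ hEne]
  have h5 : ∀ i : Fin d, (2 * Afun v lam hnd S c k t i s
        - 2 * (lam (Fin.castLE hnd k) : ℝ) * Pfun v lam hnd S c k t i s) /
          Pfun v lam hnd S c k t i s
      = 2 * (Afun v lam hnd S c k t i s / Pfun v lam hnd S c k t i s)
        - 2 * (lam (Fin.castLE hnd k) : ℝ) := by
    intro i
    rw [sub_div, mul_div_assoc, mul_div_cancel_right₀ _ (hP i s).ne']
  have h6 : (2 * Pfun v lam hnd S c k t (Fin.castLE hnd k) s
        - 2 * (lam (Fin.castLE hnd k) : ℝ) * Qfun v lam hnd S c k t s) /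
          Qfun v lam hnd S c k t s
      = 2 * (Pfun v lam hnd S c k t (Fin.castLE hnd k) s / Qfun v lam hnd S c k t s)
        - 2 * (lam (Fin.castLE hnd k) : ℝ) := by
    rw [sub_div, mul_div_assoc, mul_div_cancel_right₀ _ (hQ s).ne']
  simp only [h5, h6]
  unfold Hfun
  rw [← Finset.add_sum_erase Finset.univ _ (Finset.mem_univ (Fin.castLE hnd k))]
  have hRAB : Rfun v lam hnd S c k t s = Afun v lam hnd S c k t (Fin.castLE hnd k) s
      - Pfun v lam hnd S c k t (Fin.castLE hnd k) s := by
    unfold Rfun Afun Pfun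
    rw [← Finset.sum_sub_distrib]
    exact Finset.sum_congr rfl fun u _ => by ring
  have hfrac : (Real.exp (-(2 * 2) * s) * Rfun v lam hnd S c k t s) /
        (Real.exp (-2 * s) * Pfun v lam hnd S c k t (Fin.castLE hnd k) s)
      = Real.exp (-2 * s) * (Afun v lam hnd S c k t (Fin.castLE hnd k) s /
          Pfun v lam hnd S c k t (Fin.castLE hnd k) s) - Real.exp (-2 * s) := by
    rw [hRAB, show Real.exp (-(2 * 2) * s) = Real.exp (-2 * s) * Real.exp (-2 * s) from by
      rw [← Real.exp_add]; ring_nf]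
    rw [mul_assoc, mul_div_mul_left _ _ (Real.exp_ne_zero _), mul_div_assoc, sub_div,
      div_self (hP (Fin.castLE hnd k) s).ne', mul_sub, mul_one]
  rw [hfrac]
  have hsum : (∑ i ∈ Finset.univ.erase (Fin.castLE hnd k), (a i : ℝ) *
        ((Real.exp (-2 * s) * Pfun v lam hnd S c k t (Fin.castLE hnd k) s) /
            Qfun v lam hnd S c k t s -
         (Real.exp (-2 * s) * Afun v lam hnd S c k t i s) / Pfun v lam hnd S c k t i s))
      = Real.exp (-2 * s) * (-(1/2) * ∑ i ∈ Finset.univ.erase (Fin.castLE hnd k), (a i : ℝ) *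
          ((2 * (Afun v lam hnd S c k t i s / Pfun v lam hnd S c k t i s)
              - 2 * (lam (Fin.castLE hnd k) : ℝ))
            - (2 * (Pfun v lam hnd S c k t (Fin.castLE hnd k) s / Qfun v lam hnd S c k t s)
              - 2 * (lam (Fin.castLE hnd k) : ℝ)))) := by
    rw [Finset.mul_sum, Finset.mul_sum]
    exact Finset.sum_congr rfl fun i _ => by ring
  rw [hsum]
  ring

end AuxGzero

/-- as `tₖ → −∞` (the other coordinates of `t` fixed), the function
`e^{−2tₖ}(⟨∇g₀(ξ(t)), vₖ⟩ + aₖ)` converges to the explicit limiting value. -/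
theorem gzero_first_derivative_limit (n d : ℕ) (hnd : n ≤ d)
    (v : Fin d → Fin n → ℤ) (lam : Fin d → ℤ)
    (S : Finset (Fin n → ℤ))
    (hS : ∀ u : Fin n → ℤ, u ∈ S ↔ ∀ i : Fin d, 0 ≤ lfun v lam i u)
    (hbdd : Bornology.IsBounded {x : Fin n → ℝ | ∀ i : Fin d, 0 ≤ lfunR v lam i x})
    (c : (Fin n → ℤ) → ℝ) (hc : ∀ u ∈ S, 0 ≤ c u)
    (hbasis : IsUnit (Matrix.of fun j k : Fin n => v (Fin.castLE hnd j) k).det)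
    (hu0 : ∃ u₀ ∈ S, 0 < c u₀ ∧
      (∀ j : Fin n, lfun v lam (Fin.castLE hnd j) u₀ = 0) ∧
      (∀ i : Fin d, n ≤ (i : ℕ) → 1 ≤ lfun v lam i u₀))
    (huk : ∀ k : Fin n, ∃ u ∈ S, 0 < c u ∧
      lfun v lam (Fin.castLE hnd k) u = 1 ∧
      (∀ j : Fin n, j ≠ k → lfun v lam (Fin.castLE hnd j) u = 0))
    (a : Fin d → ℤ)
    (k : Fin n) (t : Fin n → ℝ) :
    Tendsto (fun s : ℝ =>
        Real.exp (-2 * s) *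
          (pd1 (gzero v lam S c a)
              (xi (fun j p => (v (Fin.castLE hnd j) p : ℝ)) (Function.update t k s))
              (fun p => (v (Fin.castLE hnd k) p : ℝ)) +
            (a (Fin.castLE hnd k) : ℝ)))
      atBot (nhds (limitValue v lam hnd S c a k t)) := by
  classical
  obtain ⟨u0, hu0S, hu0c, hu0z, hu0g⟩ := hu0
  have hLnn : ∀ (i : Fin d), ∀ u ∈ S, (0 : ℤ) ≤ lfun v lam i u := fun i u hu => (hS u).mp hu i
  have hwit : ∀ i : Fin d, ∃ u ∈ S, 0 < c u ∧ 1 ≤ lfun v lam i u := by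
    intro i
    by_cases h : (i : ℕ) < n
    · obtain ⟨u, huS, huc, h1, -⟩ := huk ⟨(i : ℕ), h⟩
      have hcast : Fin.castLE hnd ⟨(i : ℕ), h⟩ = i := Fin.ext rfl
      rw [hcast] at h1
      exact ⟨u, huS, huc, h1.ge⟩
    · exact ⟨u0, hu0S, hu0c, hu0g i (not_lt.mp h)⟩
  have hwit0 : ∀ i : Fin d, i ≠ Fin.castLE hnd k →
      ∃ u ∈ S, 0 < c u ∧ 1 ≤ lfun v lam i u ∧ lfun v lam (Fin.castLE hnd k) u = 0 := by
    intro i hi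
    by_cases h : (i : ℕ) < n
    · obtain ⟨u, huS, huc, h1, h0⟩ := huk ⟨(i : ℕ), h⟩
      have hcast : Fin.castLE hnd ⟨(i : ℕ), h⟩ = i := Fin.ext rfl
      rw [hcast] at h1
      have hkj : k ≠ ⟨(i : ℕ), h⟩ := by
        intro hkeq
        apply hi
        rw [← hcast, ← hkeq]
      exact ⟨u, huS, huc, h1.ge, h0 k hkj⟩
    · exact ⟨u0, hu0S, hu0c, hu0g i (not_lt.mp h), hu0z k⟩
  obtain ⟨uk, hukS, hukc, huk1, -⟩ := huk k
  have hbnn : ∀ u ∈ S, 0 ≤ bcoef v lam hnd c k t u :=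
    fun u hu => mul_nonneg (hc u hu) (Real.exp_pos _).le
  have hbpos : ∀ u : Fin n → ℤ, 0 < c u → 0 < bcoef v lam hnd c k t u :=
    fun u hcu => mul_pos hcu (Real.exp_pos _)
  -- positivity of the log arguments
  have hD : ∀ x : Fin n → ℝ, 0 < ∑ u ∈ S, c u * Real.exp (2 * ∑ m, (u m : ℝ) * x m) := by
    intro x
    apply Finset.sum_pos' (fun u hu => mul_nonneg (hc u hu) (Real.exp_pos _).le)
    exact ⟨u0, hu0S, mul_pos hu0c (Real.exp_pos _)⟩
  have hN : ∀ (i : Fin d) (x : Fin n → ℝ),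
      0 < ∑ u ∈ S, c u * (lfun v lam i u : ℝ) * Real.exp (2 * ∑ m, (u m : ℝ) * x m) := by
    intro i x
    obtain ⟨u, huS, huc, h1⟩ := hwit i
    apply Finset.sum_pos'
    · intro u' hu'
      have := hLnn i u' hu'
      exact mul_nonneg (mul_nonneg (hc u' hu') (by exact_mod_cast this)) (Real.exp_pos _).le
    · refine ⟨u, huS, mul_pos (mul_pos huc ?_) (Real.exp_pos _)⟩
      have : (0 : ℤ) < lfun v lam i u := by omega
      exact_mod_cast this
  have hPpos : ∀ (i : Fin d) (s : ℝ), 0 < Pfun v lam hnd S c k t i s := by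
    intro i s
    obtain ⟨u, huS, huc, h1⟩ := hwit i
    unfold Pfun wfun
    apply Finset.sum_pos'
    · intro u' hu'
      have := hLnn i u' hu'
      exact mul_nonneg (by exact_mod_cast this)
        (mul_nonneg (hbnn u' hu') (Real.exp_pos _).le)
    · refine ⟨u, huS, mul_pos ?_ (mul_pos (hbpos u huc) (Real.exp_pos _))⟩
      have : (0 : ℤ) < lfun v lam i u := by omega
      exact_mod_cast this
  have hQpos : ∀ s : ℝ, 0 < Qfun v lam hnd S c k t s := by
    intro s
    unfold Qfun wfun
    apply Finset.sum_pos'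
    · intro u' hu'
      exact mul_nonneg (hbnn u' hu') (Real.exp_pos _).le
    · exact ⟨u0, hu0S, mul_pos (hbpos u0 hu0c) (Real.exp_pos _)⟩
  -- the limit constants
  set Q0 : ℝ := ∑ u ∈ S.filter (fun u => lfun v lam (Fin.castLE hnd k) u = 0),
    bcoef v lam hnd c k t u with hQ0def
  set bet : ℝ := ∑ u ∈ S.filter (fun u => lfun v lam (Fin.castLE hnd k) u = 1),
    bcoef v lam hnd c k t u with hbetdef
  set gam : ℝ := ∑ u ∈ S.filter (fun u => lfun v lam (Fin.castLE hnd k) u = 2),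
    bcoef v lam hnd c k t u with hgamdef
  set alf : Fin d → ℝ := fun i => ∑ u ∈ S.filter (fun u =>
      lfun v lam (Fin.castLE hnd k) u = 1 ∧ 1 ≤ lfun v lam i u),
    (lfun v lam i u : ℝ) * bcoef v lam hnd c k t u with halfdef
  set P0 : Fin d → ℝ := fun i => ∑ u ∈ S.filter (fun u =>
      lfun v lam (Fin.castLE hnd k) u = 0 ∧ 1 ≤ lfun v lam i u),
    (lfun v lam i u : ℝ) * bcoef v lam hnd c k t u with hP0def
  have hQ0pos : 0 < Q0 := by
    rw [hQ0def]
    apply Finset.sum_pos'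
    · intro u' hu'
      exact hbnn u' (Finset.mem_filter.mp hu').1
    · exact ⟨u0, Finset.mem_filter.mpr ⟨hu0S, hu0z k⟩, hbpos u0 hu0c⟩
  have hbetpos : 0 < bet := by
    rw [hbetdef]
    apply Finset.sum_pos'
    · intro u' hu'
      exact hbnn u' (Finset.mem_filter.mp hu').1
    · exact ⟨uk, Finset.mem_filter.mpr ⟨hukS, huk1⟩, hbpos uk hukc⟩
  have hP0pos : ∀ i : Fin d, i ≠ Fin.castLE hnd k → 0 < P0 i := by
    intro i hi
    obtain ⟨u, huS, huc, h1, h0⟩ := hwit0 i hi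
    rw [hP0def]
    apply Finset.sum_pos'
    · intro u' hu'
      have hmem := Finset.mem_filter.mp hu'
      have := hLnn i u' hmem.1
      exact mul_nonneg (by exact_mod_cast this) (hbnn u' hmem.1)
    · refine ⟨u, Finset.mem_filter.mpr ⟨huS, h0, h1⟩, mul_pos ?_ (hbpos u huc)⟩
      have : (0 : ℤ) < lfun v lam i u := by omega
      exact_mod_cast this
  -- the limits
  have hQlim : Tendsto (fun s => Qfun v lam hnd S c k t s) atBot (nhds Q0) := by
    have h0 := tendsto_expsum S (bcoef v lam hnd c k t) (lfun v lam (Fin.castLE hnd k)) 0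
      (fun u hu hlt => absurd hlt (not_lt.mpr (by exact_mod_cast hLnn _ u hu)))
    have hset : S.filter (fun u => lfun v lam (Fin.castLE hnd k) u = ((0 : ℕ) : ℤ))
        = S.filter (fun u => lfun v lam (Fin.castLE hnd k) u = 0) := by norm_num
    rw [hset, ← hQ0def] at h0
    refine Tendsto.congr (fun s => ?_) h0
    unfold Qfun wfun
    rw [show Real.exp (-(2 * ((0 : ℕ) : ℝ)) * s) = 1 from by norm_num, one_mul]
  have hBlim : Tendsto (fun s => Real.exp (-2 * s) *
      Pfun v lam hnd S c k t (Fin.castLE hnd k) s) atBot (nhds bet) := by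
    have hfB : ∀ u ∈ S, lfun v lam (Fin.castLE hnd k) u < ((1 : ℕ) : ℤ) →
        (lfun v lam (Fin.castLE hnd k) u : ℝ) * bcoef v lam hnd c k t u = 0 := by
      intro u hu hlt
      have hz : lfun v lam (Fin.castLE hnd k) u = 0 := by
        have := hLnn (Fin.castLE hnd k) u hu; omega
      rw [hz]; norm_num
    have h0 := tendsto_expsum S
      (fun u => (lfun v lam (Fin.castLE hnd k) u : ℝ) * bcoef v lam hnd c k t u)
      (lfun v lam (Fin.castLE hnd k)) 1 hfB
    have hset : S.filter (fun u => lfun v lam (Fin.castLE hnd k) u = ((1 : ℕ) : ℤ))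
        = S.filter (fun u => lfun v lam (Fin.castLE hnd k) u = 1) := by norm_num
    rw [hset] at h0
    have hval : (∑ u ∈ S.filter (fun u => lfun v lam (Fin.castLE hnd k) u = 1),
        (lfun v lam (Fin.castLE hnd k) u : ℝ) * bcoef v lam hnd c k t u) = bet := by
      rw [hbetdef]
      refine Finset.sum_congr rfl fun u hu => ?_
      rw [(Finset.mem_filter.mp hu).2]
      norm_num
    rw [hval] at h0
    refine Tendsto.congr (fun s => ?_) h0
    rw [show Real.exp (-(2 * ((1 : ℕ) : ℝ)) * s) = Real.exp (-2 * s) from by norm_num]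
    unfold Pfun wfun
    rw [Finset.mul_sum, Finset.mul_sum]
    exact Finset.sum_congr rfl fun u _ => by ring
  have hAlim : ∀ i : Fin d, Tendsto (fun s => Real.exp (-2 * s) *
      Afun v lam hnd S c k t i s) atBot (nhds (alf i)) := by
    intro i
    have hfA : ∀ u ∈ S, lfun v lam (Fin.castLE hnd k) u < ((1 : ℕ) : ℤ) →
        (lfun v lam i u : ℝ) * (lfun v lam (Fin.castLE hnd k) u : ℝ) *
          bcoef v lam hnd c k t u = 0 := by
      intro u hu hlt
      have hz : lfun v lam (Fin.castLE hnd k) u = 0 := by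
        have := hLnn (Fin.castLE hnd k) u hu; omega
      rw [hz]; norm_num
    have h0 := tendsto_expsum S
      (fun u => (lfun v lam i u : ℝ) * (lfun v lam (Fin.castLE hnd k) u : ℝ) *
        bcoef v lam hnd c k t u)
      (lfun v lam (Fin.castLE hnd k)) 1 hfA
    have hset : S.filter (fun u => lfun v lam (Fin.castLE hnd k) u = ((1 : ℕ) : ℤ))
        = S.filter (fun u => lfun v lam (Fin.castLE hnd k) u = 1) := by norm_num
    rw [hset] at h0
    have hval : (∑ u ∈ S.filter (fun u => lfun v lam (Fin.castLE hnd k) u = 1),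
        (lfun v lam i u : ℝ) * (lfun v lam (Fin.castLE hnd k) u : ℝ) *
          bcoef v lam hnd c k t u) = alf i := by
      have e1 : (∑ u ∈ S.filter (fun u => lfun v lam (Fin.castLE hnd k) u = 1),
          (lfun v lam i u : ℝ) * (lfun v lam (Fin.castLE hnd k) u : ℝ) *
            bcoef v lam hnd c k t u)
          = ∑ u ∈ S.filter (fun u => lfun v lam (Fin.castLE hnd k) u = 1),
            (lfun v lam i u : ℝ) * bcoef v lam hnd c k t u := by
        refine Finset.sum_congr rfl fun u hu => ?_
        rw [(Finset.mem_filter.mp hu).2]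
        push_cast
        ring
      rw [e1, halfdef]
      refine (Finset.sum_subset ?_ ?_).symm
      · intro x hx
        have hmem := Finset.mem_filter.mp hx
        exact Finset.mem_filter.mpr ⟨hmem.1, hmem.2.1⟩
      · intro x hx hnx
        have hmem := Finset.mem_filter.mp hx
        have hnle : ¬ (1 ≤ lfun v lam i x) := by
          intro hle
          exact hnx (Finset.mem_filter.mpr ⟨hmem.1, hmem.2, hle⟩)
        have hz : lfun v lam i x = 0 := by
          have := hLnn i x hmem.1; omega
        rw [hz]; norm_num
    rw [hval] at h0
    refine Tendsto.congr (fun s => ?_) h0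
    rw [show Real.exp (-(2 * ((1 : ℕ) : ℝ)) * s) = Real.exp (-2 * s) from by norm_num]
    unfold Afun wfun
    rw [Finset.mul_sum, Finset.mul_sum]
    exact Finset.sum_congr rfl fun u _ => by ring
  have hPlim : ∀ i : Fin d, Tendsto (fun s => Pfun v lam hnd S c k t i s)
      atBot (nhds (P0 i)) := by
    intro i
    have h0 := tendsto_expsum S
      (fun u => (lfun v lam i u : ℝ) * bcoef v lam hnd c k t u)
      (lfun v lam (Fin.castLE hnd k)) 0
      (fun u hu hlt => absurd hlt (not_lt.mpr (by exact_mod_cast hLnn _ u hu)))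
    have hset : S.filter (fun u => lfun v lam (Fin.castLE hnd k) u = ((0 : ℕ) : ℤ))
        = S.filter (fun u => lfun v lam (Fin.castLE hnd k) u = 0) := by norm_num
    rw [hset] at h0
    have hval : (∑ u ∈ S.filter (fun u => lfun v lam (Fin.castLE hnd k) u = 0),
        (lfun v lam i u : ℝ) * bcoef v lam hnd c k t u) = P0 i := by
      rw [hP0def]
      refine (Finset.sum_subset ?_ ?_).symm
      · intro x hx
        have hmem := Finset.mem_filter.mp hx
        exact Finset.mem_filter.mpr ⟨hmem.1, hmem.2.1⟩
      · intro x hx hnx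
        have hmem := Finset.mem_filter.mp hx
        have hnle : ¬ (1 ≤ lfun v lam i x) := by
          intro hle
          exact hnx (Finset.mem_filter.mpr ⟨hmem.1, hmem.2, hle⟩)
        have hz : lfun v lam i x = 0 := by
          have := hLnn i x hmem.1; omega
        rw [hz]; norm_num
    rw [hval] at h0
    refine Tendsto.congr (fun s => ?_) h0
    rw [show Real.exp (-(2 * ((0 : ℕ) : ℝ)) * s) = 1 from by norm_num, one_mul]
    unfold Pfun wfun
    exact Finset.sum_congr rfl fun u _ => by ring
  have hRlim : Tendsto (fun s => Real.exp (-(2 * 2) * s) * Rfun v lam hnd S c k t s)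
      atBot (nhds (2 * gam)) := by
    have hfR : ∀ u ∈ S, lfun v lam (Fin.castLE hnd k) u < ((2 : ℕ) : ℤ) →
        ((lfun v lam (Fin.castLE hnd k) u : ℝ) * (lfun v lam (Fin.castLE hnd k) u : ℝ) -
          (lfun v lam (Fin.castLE hnd k) u : ℝ)) * bcoef v lam hnd c k t u = 0 := by
      intro u hu hlt
      have h01 : lfun v lam (Fin.castLE hnd k) u = 0 ∨ lfun v lam (Fin.castLE hnd k) u = 1 := by
        have := hLnn (Fin.castLE hnd k) u hu; omega
      rcases h01 with hz | hz <;> rw [hz] <;> norm_num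
    have h0 := tendsto_expsum S
      (fun u => ((lfun v lam (Fin.castLE hnd k) u : ℝ) * (lfun v lam (Fin.castLE hnd k) u : ℝ) -
        (lfun v lam (Fin.castLE hnd k) u : ℝ)) * bcoef v lam hnd c k t u)
      (lfun v lam (Fin.castLE hnd k)) 2 hfR
    have hset : S.filter (fun u => lfun v lam (Fin.castLE hnd k) u = ((2 : ℕ) : ℤ))
        = S.filter (fun u => lfun v lam (Fin.castLE hnd k) u = 2) := by norm_num
    rw [hset] at h0
    have hval : (∑ u ∈ S.filter (fun u => lfun v lam (Fin.castLE hnd k) u = 2),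
        ((lfun v lam (Fin.castLE hnd k) u : ℝ) * (lfun v lam (Fin.castLE hnd k) u : ℝ) -
          (lfun v lam (Fin.castLE hnd k) u : ℝ)) * bcoef v lam hnd c k t u) = 2 * gam := by
      have e1 : (∑ u ∈ S.filter (fun u => lfun v lam (Fin.castLE hnd k) u = 2),
          ((lfun v lam (Fin.castLE hnd k) u : ℝ) * (lfun v lam (Fin.castLE hnd k) u : ℝ) -
            (lfun v lam (Fin.castLE hnd k) u : ℝ)) * bcoef v lam hnd c k t u)
          = ∑ u ∈ S.filter (fun u => lfun v lam (Fin.castLE hnd k) u = 2),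
            2 * bcoef v lam hnd c k t u := by
        refine Finset.sum_congr rfl fun u hu => ?_
        rw [(Finset.mem_filter.mp hu).2]
        norm_num
      rw [e1, ← Finset.mul_sum, hgamdef]
    rw [hval] at h0
    refine Tendsto.congr (fun s => ?_) h0
    rw [show Real.exp (-(2 * ((2 : ℕ) : ℝ)) * s) = Real.exp (-(2 * 2) * s) from by norm_num]
    unfold Rfun wfun
    rw [Finset.mul_sum, Finset.mul_sum]
    exact Finset.sum_congr rfl fun u _ => by ring
  -- identify the limit value
  have hglim : limitValue v lam hnd S c a k t
      = (∑ i ∈ Finset.univ.erase (Fin.castLE hnd k),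
          (a i : ℝ) * (bet / Q0 - alf i / P0 i))
        + (a (Fin.castLE hnd k) : ℝ) * (bet / Q0 - (2 * gam) / bet) := by
    rw [sum_rearrange (Fin.castLE hnd k) (fun i => ((a i : ℝ))) (bet / Q0)
      ((2 * gam) / bet) (fun i => alf i / P0 i)]
    unfold limitValue
    simp only [hbetdef, hQ0def, hgamdef, halfdef, hP0def]
    ring
  rw [hglim]
  have hH : Tendsto (Hfun v lam hnd S c k t a) atBot
      (nhds ((∑ i ∈ Finset.univ.erase (Fin.castLE hnd k),
          (a i : ℝ) * (bet / Q0 - alf i / P0 i))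
        + (a (Fin.castLE hnd k) : ℝ) * (bet / Q0 - (2 * gam) / bet))) := by
    unfold Hfun
    refine Tendsto.add (tendsto_finset_sum _ fun i hi => ?_) ?_
    · exact ((hBlim.div hQlim hQ0pos.ne').sub
        ((hAlim i).div (hPlim i) ((hP0pos i (Finset.ne_of_mem_erase hi)).ne'))).const_mul _
    · exact ((hBlim.div hQlim hQ0pos.ne').sub (hRlim.div hBlim hbetpos.ne')).const_mul _
  exact hH.congr fun s => (Hpt v lam hnd S c k t a hN hD hPpos hQpos s).symm
end
end

section
/- Under the hypotheses on (v₁,…,v_d; λ₁,…,λ_d; c; a) stated in the context, fix k ∈ {1,…,n} and fix t₁,…,t_{k−1},t_{k+1},…,tₙ ∈ ℝ, and set b_u = c_u·e^{2·Σ_{m∈{1,…,n}, m≠k} l_m(u)t_m} for u ∈ S. Then, as tₖ → −∞, the function e^{−2tₖ}·vₖᵀ(Hess g₀)(ξ(t))vₖ converges to the value 2(Σᵢ₌₁^d aᵢ)·(Σ_{u∈S, lₖ(u)=1} b_u)/(Σ_{u∈S, lₖ(u)=0} b_u) − 2·Σ_{i∈{1,…,d}, i≠k} aᵢ·(Σ_{u∈S,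 lₖ(u)=1, lᵢ(u)≥1} lᵢ(u)b_u)/(Σ_{u∈S, lₖ(u)=0, lᵢ(u)≥1} lᵢ(u)b_u) − 4aₖ·(Σ_{u∈S, lₖ(u)=2} b_u)/(Σ_{u∈S, lₖ(u)=1} b_u). -/
open Filter

noncomputable section

namespace GZ

def ip {n : ℕ} (u : Fin n → ℤ) (x : Fin n → ℝ) : ℝ := ∑ m, (u m : ℝ) * x m

def ipL {n : ℕ} (u : Fin n → ℤ) : (Fin n → ℝ) →L[ℝ] ℝ :=
  ∑ m, (u m : ℝ) • ContinuousLinearMap.proj m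

lemma ipL_apply {n : ℕ} (u : Fin n → ℤ) (w : Fin n → ℝ) : ipL u w = ip u w := by
  simp [ipL, ip]

def PS {n : ℕ} (S : Finset (Fin n → ℤ)) (β : (Fin n → ℤ) → ℝ) (x : Fin n → ℝ) : ℝ :=
  ∑ u ∈ S, β u * Real.exp (2 * ip u x)

def dPS {n : ℕ} (S : Finset (Fin n → ℤ)) (β : (Fin n → ℤ) → ℝ) (x : Fin n → ℝ) :
    (Fin n → ℝ) →L[ℝ] ℝ :=
  ∑ u ∈ S, (β u * (2 * Real.exp (2 * ip u x))) • ipL u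

lemma dPS_apply {n : ℕ} (S : Finset (Fin n → ℤ)) (β : (Fin n → ℤ) → ℝ) (x w : Fin n → ℝ) :
    dPS S β x w = PS S (fun u => β u * (2 * ip u w)) x := by
  rw [dPS, PS, ContinuousLinearMap.sum_apply]
  refine Finset.sum_congr rfl fun u _ => ?_
  rw [ContinuousLinearMap.smul_apply, ipL_apply, smul_eq_mul]; ring

lemma hasFDerivAt_PS {n : ℕ} (S : Finset (Fin n → ℤ)) (β : (Fin n → ℤ) → ℝ) (x : Fin n → ℝ) :
    HasFDerivAt (PS S β) (dPS S β x) x := by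
  apply HasFDerivAt.fun_sum
  intro u _
  have h0 : HasFDerivAt (fun x : Fin n → ℝ => ip u x) (ipL u) x := by
    have he : (fun x : Fin n → ℝ => ip u x) = ⇑(ipL u) :=
      funext fun w => (ipL_apply u w).symm
    rw [he]; exact (ipL u).hasFDerivAt
  have h2 := (h0.const_mul (2:ℝ)).exp
  have h3 := h2.const_mul (β u)
  refine h3.congr_fderiv ?_
  rw [smul_smul, smul_smul]; ring_nf

lemma PS_pos {n : ℕ} (S : Finset (Fin n → ℤ)) (β : (Fin n → ℤ) → ℝ)
    (hβ : ∀ u ∈ S, 0 ≤ β u) {u₀ : Fin n → ℤ} (h₀ : u₀ ∈ S) (hpos : 0 < β u₀)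
    (x : Fin n → ℝ) : 0 < PS S β x :=
  Finset.sum_pos' (fun u hu => mul_nonneg (hβ u hu) (Real.exp_pos _).le)
    ⟨u₀, h₀, mul_pos hpos (Real.exp_pos _)⟩

lemma shift {n : ℕ} (S : Finset (Fin n → ℤ)) (lk : (Fin n → ℤ) → ℤ)
    (Bc γ : (Fin n → ℤ) → ℝ) (j : ℤ)
    (hγ : ∀ u ∈ S, lk u < j → γ u = 0) :
    Tendsto (fun s : ℝ =>
        Real.exp (-(2*(j:ℝ))*s) * ∑ u ∈ S, γ u * Bc u * Real.exp (2*(lk u:ℝ)*s))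
      atBot (nhds (∑ u ∈ S.filter fun u => lk u = j, γ u * Bc u)) := by
  classical
  have key : ∀ s : ℝ,
      Real.exp (-(2*(j:ℝ))*s) * ∑ u ∈ S, γ u * Bc u * Real.exp (2*(lk u:ℝ)*s)
        = ∑ u ∈ S, γ u * Bc u * Real.exp (2*((lk u - j : ℤ):ℝ)*s) := by
    intro s
    rw [Finset.mul_sum]
    refine Finset.sum_congr rfl fun u _ => ?_
    have h : Real.exp (-(2*(j:ℝ))*s) * Real.exp (2*(lk u:ℝ)*s)
        = Real.exp (2*((lk u - j : ℤ):ℝ)*s) := by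
      rw [← Real.exp_add]; congr 1; push_cast; ring
    rw [← h]; ring
  rw [Finset.sum_filter]
  refine Tendsto.congr (fun s => (key s).symm) ?_
  refine tendsto_finset_sum _ fun u hu => ?_
  rcases lt_trichotomy (lk u) j with h | h | h
  · have hz := hγ u hu h
    have : (fun s : ℝ => γ u * Bc u * Real.exp (2*((lk u - j : ℤ):ℝ)*s))
        = fun _ => (0:ℝ) := by funext s; rw [hz]; ring
    rw [this, if_neg (by omega)]
    exact tendsto_const_nhds
  · have : (fun s : ℝ => γ u * Bc u * Real.exp (2*((lk u - j : ℤ):ℝ)*s))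
        = fun _ => γ u * Bc u := by
      funext s; rw [h]; simp
    rw [this, if_pos h]
    exact tendsto_const_nhds
  · have hc : (0:ℝ) < 2*((lk u - j : ℤ):ℝ) := by
      have : (0:ℝ) < ((lk u - j : ℤ):ℝ) := by exact_mod_cast Int.sub_pos.mpr h
      linarith
    have h1 : Tendsto (fun s : ℝ => 2*((lk u - j : ℤ):ℝ)*s) atBot atBot := by
      exact (tendsto_id (α := ℝ)).const_mul_atBot hc
    have h2 : Tendsto (fun s : ℝ => Real.exp (2*((lk u - j : ℤ):ℝ)*s)) atBot (nhds 0) :=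
      Real.tendsto_exp_atBot.comp h1
    rw [if_neg (by omega)]
    simpa using (tendsto_const_nhds (x := γ u * Bc u)).mul h2


lemma master {n : ℕ} (S : Finset (Fin n → ℤ)) (lk : (Fin n → ℤ) → ℤ)
    (Bc β γ₁ γ₂ : (Fin n → ℤ) → ℝ) (j : ℤ)
    (hβ : ∀ u ∈ S, lk u < j → β u = 0)
    (h1 : ∀ u ∈ S, lk u ≤ j → γ₁ u = 0)
    (h2 : ∀ u ∈ S, lk u < j + 1 → γ₂ u = 0)
    (hD : (∑ u ∈ S.filter fun u => lk u = j, β u * Bc u) ≠ 0) :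
    Tendsto (fun s : ℝ =>
        Real.exp (-2*s) * ((∑ u ∈ S, γ₂ u * Bc u * Real.exp (2*(lk u:ℝ)*s))
            / (∑ u ∈ S, β u * Bc u * Real.exp (2*(lk u:ℝ)*s)))
        - Real.exp (-2*s) * ((∑ u ∈ S, γ₁ u * Bc u * Real.exp (2*(lk u:ℝ)*s))^2
            / (∑ u ∈ S, β u * Bc u * Real.exp (2*(lk u:ℝ)*s))^2))
      atBot (nhds ((∑ u ∈ S.filter fun u => lk u = j + 1, γ₂ u * Bc u)
          / (∑ u ∈ S.filter fun u => lk u = j, β u * Bc u))) := by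
  classical
  have T2 := shift S lk Bc γ₂ (j+1) (fun u hu h => h2 u hu (by omega))
  have T0 := shift S lk Bc β j hβ
  have T1a := shift S lk Bc γ₁ (j+1) (fun u hu h => h1 u hu (by omega))
  have T1b := shift S lk Bc γ₁ j (fun u hu h => h1 u hu (le_of_lt h))
  have hz : (∑ u ∈ S.filter fun u => lk u = j, γ₁ u * Bc u) = 0 := by
    refine Finset.sum_eq_zero fun u hu => ?_
    rw [h1 u (Finset.mem_filter.mp hu).1 (le_of_eq (Finset.mem_filter.mp hu).2), zero_mul]
  rw [hz] at T1b
  have S1 := T2.div T0 hD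
  have S2 := (T1a.mul T1b).div (T0.pow 2) (pow_ne_zero 2 hD)
  have main := S1.sub S2
  rw [mul_zero, zero_div, sub_zero] at main
  refine Tendsto.congr (fun s => ?_) main
  have hexp : Real.exp (-(2*((j+1:ℤ):ℝ))*s) / Real.exp (-(2*(j:ℝ))*s) = Real.exp (-2*s) := by
    rw [← Real.exp_sub]; congr 1; push_cast; ring
  have hexp2 : Real.exp (-(2*((j+1:ℤ):ℝ))*s) * Real.exp (-(2*(j:ℝ))*s)
      / (Real.exp (-(2*(j:ℝ))*s))^2 = Real.exp (-2*s) := by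
    rw [sq, ← Real.exp_add, ← Real.exp_add, ← Real.exp_sub]; congr 1; push_cast; ring
  have e1 : (Real.exp (-(2*((j+1:ℤ):ℝ))*s) * ∑ u ∈ S, γ₂ u * Bc u * Real.exp (2*(lk u:ℝ)*s))
        / (Real.exp (-(2*(j:ℝ))*s) * ∑ u ∈ S, β u * Bc u * Real.exp (2*(lk u:ℝ)*s))
      = Real.exp (-2*s) * ((∑ u ∈ S, γ₂ u * Bc u * Real.exp (2*(lk u:ℝ)*s))
          / (∑ u ∈ S, β u * Bc u * Real.exp (2*(lk u:ℝ)*s))) := by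
    rw [mul_div_mul_comm, hexp]
  have e2 : (Real.exp (-(2*((j+1:ℤ):ℝ))*s) * ∑ u ∈ S, γ₁ u * Bc u * Real.exp (2*(lk u:ℝ)*s))
        * (Real.exp (-(2*(j:ℝ))*s) * ∑ u ∈ S, γ₁ u * Bc u * Real.exp (2*(lk u:ℝ)*s))
        / (Real.exp (-(2*(j:ℝ))*s) * ∑ u ∈ S, β u * Bc u * Real.exp (2*(lk u:ℝ)*s))^2
      = Real.exp (-2*s) * ((∑ u ∈ S, γ₁ u * Bc u * Real.exp (2*(lk u:ℝ)*s))^2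
          / (∑ u ∈ S, β u * Bc u * Real.exp (2*(lk u:ℝ)*s))^2) := by
    have h3 : (Real.exp (-(2*((j+1:ℤ):ℝ))*s) * ∑ u ∈ S, γ₁ u * Bc u * Real.exp (2*(lk u:ℝ)*s))
        * (Real.exp (-(2*(j:ℝ))*s) * ∑ u ∈ S, γ₁ u * Bc u * Real.exp (2*(lk u:ℝ)*s))
        = (Real.exp (-(2*((j+1:ℤ):ℝ))*s) * Real.exp (-(2*(j:ℝ))*s))
          * (∑ u ∈ S, γ₁ u * Bc u * Real.exp (2*(lk u:ℝ)*s))^2 := by ring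
    rw [h3, mul_pow, mul_div_mul_comm, hexp2]
  simp only [Pi.div_apply]
  rw [e1, e2]

lemma ip_xi {n d : ℕ} (hnd : n ≤ d) (v : Fin d → Fin n → ℤ) (lam : Fin d → ℤ)
    (u : Fin n → ℤ) (t' : Fin n → ℝ) :
    ip u (xi (fun j p => ((v (Fin.castLE hnd j) p : ℤ) : ℝ)) t')
      = ∑ m, t' m * (((lfun v lam (Fin.castLE hnd m) u : ℤ):ℝ)
          - ((lam (Fin.castLE hnd m) : ℤ):ℝ)) := by
  have hl : ∀ m : Fin n, ((lfun v lam (Fin.castLE hnd m) u : ℤ):ℝ)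
        - ((lam (Fin.castLE hnd m):ℤ):ℝ)
      = ∑ p, (u p : ℝ) * (v (Fin.castLE hnd m) p : ℝ) := by
    intro m; unfold lfun; push_cast; ring
  simp only [hl, ip, xi, Finset.sum_apply, Pi.smul_apply, smul_eq_mul]
  simp only [Finset.mul_sum]
  rw [Finset.sum_comm]
  exact Finset.sum_congr rfl fun m _ => Finset.sum_congr rfl fun p _ => by ring

set_option maxHeartbeats 1000000 in
lemma PS_on_curve {n d : ℕ} (hnd : n ≤ d) (v : Fin d → Fin n → ℤ) (lam : Fin d → ℤ)
    (S : Finset (Fin n → ℤ)) (k : Fin n) (t : Fin n → ℝ)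
    (γ : (Fin n → ℤ) → ℝ) (s : ℝ) :
    PS S γ (xi (fun j p => ((v (Fin.castLE hnd j) p : ℤ) : ℝ)) (Function.update t k s))
      = Real.exp (-(2*((∑ m ∈ Finset.univ.erase k, ((lam (Fin.castLE hnd m):ℤ):ℝ) * t m)
            + ((lam (Fin.castLE hnd k):ℤ):ℝ) * s)))
        * ∑ u ∈ S, γ u
            * Real.exp (2 * ∑ m ∈ Finset.univ.erase k,
                ((lfun v lam (Fin.castLE hnd m) u : ℤ):ℝ) * t m)
            * Real.exp (2*((lfun v lam (Fin.castLE hnd k) u : ℤ):ℝ)*s) := by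
  unfold PS
  rw [Finset.mul_sum]
  refine Finset.sum_congr rfl fun u _ => ?_
  rw [ip_xi hnd v lam u _]
  have hsum : ∑ m, Function.update t k s m * (((lfun v lam (Fin.castLE hnd m) u : ℤ):ℝ)
        - ((lam (Fin.castLE hnd m) : ℤ):ℝ))
      = s * (((lfun v lam (Fin.castLE hnd k) u : ℤ):ℝ) - ((lam (Fin.castLE hnd k) : ℤ):ℝ))
        + ((∑ m ∈ Finset.univ.erase k, ((lfun v lam (Fin.castLE hnd m) u : ℤ):ℝ) * t m)
           - ∑ m ∈ Finset.univ.erase k, ((lam (Fin.castLE hnd m):ℤ):ℝ) * t m) := by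
    rw [← Finset.add_sum_erase _ _ (Finset.mem_univ k), Function.update_self]
    rw [← Finset.sum_sub_distrib]
    congr 1
    refine Finset.sum_congr rfl fun m hm => ?_
    rw [Function.update_of_ne (Finset.mem_erase.mp hm).1]
    ring
  rw [hsum]
  have hcomb : ∀ A B C : ℝ, Real.exp A * (γ u * Real.exp B * Real.exp C)
      = γ u * Real.exp (A + B + C) := by
    intro A B C; rw [Real.exp_add, Real.exp_add]; ring
  rw [hcomb]
  congr 2
  ring

/-- The full second-derivative formula. -/
lemma pd2_formula {n d : ℕ} (S : Finset (Fin n → ℤ)) (a : Fin d → ℝ)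
    (βf : Fin d → (Fin n → ℤ) → ℝ) (cf : (Fin n → ℤ) → ℝ)
    (hP : ∀ i x, 0 < PS S (βf i) x) (hQ : ∀ x, 0 < PS S cf x)
    (w : Fin n → ℝ) (x : Fin n → ℝ) :
    pd2 (fun y => -(1/2) * ∑ i, a i * Real.log (PS S (βf i) y / PS S cf y)) x w w
    = -(1/2) * ∑ i, a i *
        (((PS S (βf i) x)⁻¹ * PS S (fun u => (βf i u * (2 * ip u w)) * (2 * ip u w)) x
          - ((PS S (βf i) x)^2)⁻¹ * (PS S (fun u => βf i u * (2 * ip u w)) x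
             * PS S (fun u => βf i u * (2 * ip u w)) x))
         - ((PS S cf x)⁻¹ * PS S (fun u => (cf u * (2 * ip u w)) * (2 * ip u w)) x
          - ((PS S cf x)^2)⁻¹ * (PS S (fun u => cf u * (2 * ip u w)) x
             * PS S (fun u => cf u * (2 * ip u w)) x))) := by
  classical
  have hfun : (fun y => -(1/2) * ∑ i, a i * Real.log (PS S (βf i) y / PS S cf y))
      = fun y => -(1/2) * ∑ i, a i * (Real.log (PS S (βf i) y) - Real.log (PS S cf y)) := by
    funext y
    congr 1
    refine Finset.sum_congr rfl fun i _ => ?_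
    rw [Real.log_div (hP i y).ne' (hQ y).ne']
  rw [pd2, hfun]
  -- first derivative
  have hG : ∀ y, HasFDerivAt
      (fun y => -(1/2:ℝ) * ∑ i, a i * (Real.log (PS S (βf i) y) - Real.log (PS S cf y)))
      ((-(1/2:ℝ)) • ∑ i, a i •
        ((PS S (βf i) y)⁻¹ • dPS S (βf i) y - (PS S cf y)⁻¹ • dPS S cf y)) y := by
    intro y
    refine HasFDerivAt.const_mul ?_ _
    refine HasFDerivAt.fun_sum fun i _ => HasFDerivAt.const_mul ?_ _
    exact ((hasFDerivAt_PS S (βf i) y).log (hP i y).ne').sub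
      ((hasFDerivAt_PS S cf y).log (hQ y).ne')
  have hfd1 : (fun y => fderiv ℝ
      (fun y => -(1/2:ℝ) * ∑ i, a i * (Real.log (PS S (βf i) y) - Real.log (PS S cf y))) y w)
      = fun y => -(1/2:ℝ) * ∑ i, a i *
          ((PS S (βf i) y)⁻¹ * PS S (fun u => βf i u * (2 * ip u w)) y
           - (PS S cf y)⁻¹ * PS S (fun u => cf u * (2 * ip u w)) y) := by
    funext y
    rw [(hG y).fderiv]
    simp only [ContinuousLinearMap.smul_apply, ContinuousLinearMap.sum_apply,
      ContinuousLinearMap.sub_apply, smul_eq_mul, dPS_apply]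
  rw [hfd1]
  -- second derivative
  have hH : HasFDerivAt
      (fun y => -(1/2:ℝ) * ∑ i, a i *
          ((PS S (βf i) y)⁻¹ * PS S (fun u => βf i u * (2 * ip u w)) y
           - (PS S cf y)⁻¹ * PS S (fun u => cf u * (2 * ip u w)) y))
      ((-(1/2:ℝ)) • ∑ i, a i •
        (((PS S (βf i) x)⁻¹ • dPS S (fun u => βf i u * (2 * ip u w)) x
            + PS S (fun u => βf i u * (2 * ip u w)) x •
                ((-((PS S (βf i) x)^2)⁻¹) • dPS S (βf i) x))
         - ((PS S cf x)⁻¹ • dPS S (fun u => cf u * (2 * ip u w)) x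
            + PS S (fun u => cf u * (2 * ip u w)) x •
                ((-((PS S cf x)^2)⁻¹) • dPS S cf x)))) x := by
    refine HasFDerivAt.const_mul ?_ _
    refine HasFDerivAt.fun_sum fun i _ => HasFDerivAt.const_mul ?_ _
    refine HasFDerivAt.sub ?_ ?_
    · exact HasFDerivAt.mul
        ((hasDerivAt_inv (hP i x).ne').comp_hasFDerivAt x (hasFDerivAt_PS S (βf i) x))
        (hasFDerivAt_PS S (fun u => βf i u * (2 * ip u w)) x)
    · exact HasFDerivAt.mul
        ((hasDerivAt_inv (hQ x).ne').comp_hasFDerivAt x (hasFDerivAt_PS S cf x))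
        (hasFDerivAt_PS S (fun u => cf u * (2 * ip u w)) x)
  rw [hH.fderiv]
  simp only [ContinuousLinearMap.smul_apply, ContinuousLinearMap.sum_apply,
    ContinuousLinearMap.sub_apply, ContinuousLinearMap.add_apply, smul_eq_mul, dPS_apply]
  congr 1
  refine Finset.sum_congr rfl fun i _ => ?_
  ring


end GZ

namespace GZ

lemma scalar_identity (e E F G1 G2 m : ℝ) (hE : E ≠ 0) (hF : F ≠ 0) :
    e * (G2 / F) - e * (G1^2 / F^2)
      = e * ((E*F)⁻¹ * (E*(G2 - 2*m*G1 + m^2*F))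
          - ((E*F)^2)⁻¹ * ((E*(G1 - m*F)) * (E*(G1 - m*F)))) := by
  field_simp
  ring

lemma ipVk {n d : ℕ} (hnd : n ≤ d) (v : Fin d → Fin n → ℤ) (lam : Fin d → ℤ)
    (k : Fin n) (u : Fin n → ℤ) :
    ip u (fun p => ((v (Fin.castLE hnd k) p : ℤ):ℝ))
      = ((lfun v lam (Fin.castLE hnd k) u : ℤ):ℝ) - ((lam (Fin.castLE hnd k) : ℤ):ℝ) := by
  unfold ip lfun; push_cast; ring

set_option maxHeartbeats 2000000 in
lemma bracket_tendsto {n d : ℕ} (hnd : n ≤ d) (v : Fin d → Fin n → ℤ) (lam : Fin d → ℤ)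
    (S : Finset (Fin n → ℤ)) (k : Fin n) (t : Fin n → ℝ)
    (β : (Fin n → ℤ) → ℝ) (j : ℤ)
    (hpos : ∀ x, 0 < PS S β x)
    (hβ : ∀ u ∈ S, lfun v lam (Fin.castLE hnd k) u < j → β u = 0)
    (hD : (∑ u ∈ S.filter fun u => lfun v lam (Fin.castLE hnd k) u = j,
        β u * Real.exp (2 * ∑ m ∈ Finset.univ.erase k,
          ((lfun v lam (Fin.castLE hnd m) u : ℤ):ℝ) * t m)) ≠ 0) :
    Tendsto (fun s : ℝ => Real.exp (-2*s) *
        ((PS S β (xi (fun j p => ((v (Fin.castLE hnd j) p : ℤ):ℝ)) (Function.update t k s)))⁻¹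
            * PS S (fun u => (β u * (2 * ip u (fun p => ((v (Fin.castLE hnd k) p : ℤ):ℝ))))
                  * (2 * ip u (fun p => ((v (Fin.castLE hnd k) p : ℤ):ℝ))))
                (xi (fun j p => ((v (Fin.castLE hnd j) p : ℤ):ℝ)) (Function.update t k s))
          - ((PS S β (xi (fun j p => ((v (Fin.castLE hnd j) p : ℤ):ℝ)) (Function.update t k s)))^2)⁻¹
            * (PS S (fun u => β u * (2 * ip u (fun p => ((v (Fin.castLE hnd k) p : ℤ):ℝ))))
                  (xi (fun j p => ((v (Fin.castLE hnd j) p : ℤ):ℝ)) (Function.update t k s))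
               * PS S (fun u => β u * (2 * ip u (fun p => ((v (Fin.castLE hnd k) p : ℤ):ℝ))))
                  (xi (fun j p => ((v (Fin.castLE hnd j) p : ℤ):ℝ)) (Function.update t k s)))))
      atBot
      (nhds (4 * (∑ u ∈ S.filter fun u => lfun v lam (Fin.castLE hnd k) u = j + 1,
            β u * Real.exp (2 * ∑ m ∈ Finset.univ.erase k,
              ((lfun v lam (Fin.castLE hnd m) u : ℤ):ℝ) * t m))
          / (∑ u ∈ S.filter fun u => lfun v lam (Fin.castLE hnd k) u = j,
            β u * Real.exp (2 * ∑ m ∈ Finset.univ.erase k,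
              ((lfun v lam (Fin.castLE hnd m) u : ℤ):ℝ) * t m)))) := by
  classical
  have h1 : ∀ u ∈ S, lfun v lam (Fin.castLE hnd k) u ≤ j →
      β u * (2*(((lfun v lam (Fin.castLE hnd k) u : ℤ):ℝ) - (j:ℝ))) = 0 := by
    intro u hu hle
    rcases lt_or_eq_of_le hle with h | h
    · rw [hβ u hu h, zero_mul]
    · rw [h]; simp
  have h2 : ∀ u ∈ S, lfun v lam (Fin.castLE hnd k) u < j + 1 →
      β u * (2*(((lfun v lam (Fin.castLE hnd k) u : ℤ):ℝ) - (j:ℝ)))^2 = 0 := by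
    intro u hu hlt
    rcases lt_or_eq_of_le (Int.lt_add_one_iff.mp hlt) with h | h
    · rw [hβ u hu h, zero_mul]
    · rw [h]; simp
  have T := master S (fun u => lfun v lam (Fin.castLE hnd k) u)
    (fun u => Real.exp (2 * ∑ m ∈ Finset.univ.erase k,
      ((lfun v lam (Fin.castLE hnd m) u : ℤ):ℝ) * t m))
    β
    (fun u => β u * (2*(((lfun v lam (Fin.castLE hnd k) u : ℤ):ℝ) - (j:ℝ))))
    (fun u => β u * (2*(((lfun v lam (Fin.castLE hnd k) u : ℤ):ℝ) - (j:ℝ)))^2)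
    j hβ h1 h2 hD
  beta_reduce at T
  have hnum : (∑ u ∈ S.filter fun u => lfun v lam (Fin.castLE hnd k) u = j + 1,
        (β u * (2*(((lfun v lam (Fin.castLE hnd k) u : ℤ):ℝ) - (j:ℝ)))^2)
          * Real.exp (2 * ∑ m ∈ Finset.univ.erase k,
            ((lfun v lam (Fin.castLE hnd m) u : ℤ):ℝ) * t m))
      = 4 * ∑ u ∈ S.filter fun u => lfun v lam (Fin.castLE hnd k) u = j + 1,
          β u * Real.exp (2 * ∑ m ∈ Finset.univ.erase k,
            ((lfun v lam (Fin.castLE hnd m) u : ℤ):ℝ) * t m) := by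
    rw [Finset.mul_sum]
    refine Finset.sum_congr rfl fun u hu => ?_
    rw [(Finset.mem_filter.mp hu).2]
    push_cast; ring
  rw [hnum] at T
  refine Tendsto.congr (fun s => ?_) T
  -- abbreviations for this fixed s
  set μ : ℝ := 2*((lam (Fin.castLE hnd k) : ℤ):ℝ) - 2*(j:ℝ) with hμ
  have hc1 := PS_on_curve hnd v lam S k t β s
  have hc2 := PS_on_curve hnd v lam S k t
    (fun u => (β u * (2 * ip u (fun p => ((v (Fin.castLE hnd k) p : ℤ):ℝ))))
        * (2 * ip u (fun p => ((v (Fin.castLE hnd k) p : ℤ):ℝ)))) s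
  have hc3 := PS_on_curve hnd v lam S k t
    (fun u => β u * (2 * ip u (fun p => ((v (Fin.castLE hnd k) p : ℤ):ℝ)))) s
  rw [hc1, hc2, hc3]
  have hEpos := Real.exp_pos (-(2*((∑ m ∈ Finset.univ.erase k,
      ((lam (Fin.castLE hnd m):ℤ):ℝ) * t m) + ((lam (Fin.castLE hnd k):ℤ):ℝ) * s)))
  have hFβ : 0 < ∑ u ∈ S, β u
      * Real.exp (2 * ∑ m ∈ Finset.univ.erase k,
          ((lfun v lam (Fin.castLE hnd m) u : ℤ):ℝ) * t m)
      * Real.exp (2*((lfun v lam (Fin.castLE hnd k) u : ℤ):ℝ)*s) := by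
    have h := hpos (xi (fun j p => ((v (Fin.castLE hnd j) p : ℤ):ℝ)) (Function.update t k s))
    rw [hc1] at h
    by_contra hcon
    push_neg at hcon
    nlinarith
  have hκκ : (∑ u ∈ S, ((β u * (2 * ip u (fun p => ((v (Fin.castLE hnd k) p : ℤ):ℝ))))
          * (2 * ip u (fun p => ((v (Fin.castLE hnd k) p : ℤ):ℝ))))
        * Real.exp (2 * ∑ m ∈ Finset.univ.erase k,
            ((lfun v lam (Fin.castLE hnd m) u : ℤ):ℝ) * t m)
        * Real.exp (2*((lfun v lam (Fin.castLE hnd k) u : ℤ):ℝ)*s))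
      = (∑ u ∈ S, (β u * (2*(((lfun v lam (Fin.castLE hnd k) u : ℤ):ℝ) - (j:ℝ)))^2)
            * Real.exp (2 * ∑ m ∈ Finset.univ.erase k,
                ((lfun v lam (Fin.castLE hnd m) u : ℤ):ℝ) * t m)
            * Real.exp (2*((lfun v lam (Fin.castLE hnd k) u : ℤ):ℝ)*s))
        - 2*μ*(∑ u ∈ S, (β u * (2*(((lfun v lam (Fin.castLE hnd k) u : ℤ):ℝ) - (j:ℝ))))
            * Real.exp (2 * ∑ m ∈ Finset.univ.erase k,
                ((lfun v lam (Fin.castLE hnd m) u : ℤ):ℝ) * t m)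
            * Real.exp (2*((lfun v lam (Fin.castLE hnd k) u : ℤ):ℝ)*s))
        + μ^2*(∑ u ∈ S, β u
            * Real.exp (2 * ∑ m ∈ Finset.univ.erase k,
                ((lfun v lam (Fin.castLE hnd m) u : ℤ):ℝ) * t m)
            * Real.exp (2*((lfun v lam (Fin.castLE hnd k) u : ℤ):ℝ)*s)) := by
    simp only [Finset.mul_sum, ← Finset.sum_sub_distrib, ← Finset.sum_add_distrib]
    refine Finset.sum_congr rfl fun u _ => ?_
    rw [ipVk hnd v lam k u, hμ]
    ring
  have hκ : (∑ u ∈ S, (β u * (2 * ip u (fun p => ((v (Fin.castLE hnd k) p : ℤ):ℝ))))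
        * Real.exp (2 * ∑ m ∈ Finset.univ.erase k,
            ((lfun v lam (Fin.castLE hnd m) u : ℤ):ℝ) * t m)
        * Real.exp (2*((lfun v lam (Fin.castLE hnd k) u : ℤ):ℝ)*s))
      = (∑ u ∈ S, (β u * (2*(((lfun v lam (Fin.castLE hnd k) u : ℤ):ℝ) - (j:ℝ))))
            * Real.exp (2 * ∑ m ∈ Finset.univ.erase k,
                ((lfun v lam (Fin.castLE hnd m) u : ℤ):ℝ) * t m)
            * Real.exp (2*((lfun v lam (Fin.castLE hnd k) u : ℤ):ℝ)*s))
        - μ*(∑ u ∈ S, β u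
            * Real.exp (2 * ∑ m ∈ Finset.univ.erase k,
                ((lfun v lam (Fin.castLE hnd m) u : ℤ):ℝ) * t m)
            * Real.exp (2*((lfun v lam (Fin.castLE hnd k) u : ℤ):ℝ)*s)) := by
    simp only [Finset.mul_sum, ← Finset.sum_sub_distrib]
    refine Finset.sum_congr rfl fun u _ => ?_
    rw [ipVk hnd v lam k u, hμ]
    ring
  rw [hκκ, hκ]
  exact scalar_identity _ _ _ _ _ _ (Real.exp_ne_zero _) hFβ.ne'

end GZ

set_option maxHeartbeats 4000000 in
/-- as `tₖ → −∞` (the other coordinates of `t` fixed), the function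
`e^{−2tₖ}·vₖᵀ(Hess g₀)(ξ(t))vₖ` converges to
`2(Σᵢ aᵢ)·(Σ_{lₖ(u)=1} b_u)/(Σ_{lₖ(u)=0} b_u)
  − 2Σ_{i≠k} aᵢ·(Σ_{lₖ(u)=1, lᵢ(u)≥1} lᵢ(u)b_u)/(Σ_{lₖ(u)=0, lᵢ(u)≥1} lᵢ(u)b_u)
  − 4aₖ·(Σ_{lₖ(u)=2} b_u)/(Σ_{lₖ(u)=1} b_u)`. -/
theorem gzero_second_derivative_limit (n d : ℕ) (hnd : n ≤ d)
    (v : Fin d → Fin n → ℤ) (lam : Fin d → ℤ)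
    (S : Finset (Fin n → ℤ))
    (hS : ∀ u : Fin n → ℤ, u ∈ S ↔ ∀ i : Fin d, 0 ≤ lfun v lam i u)
    (hbdd : Bornology.IsBounded {x : Fin n → ℝ | ∀ i : Fin d, 0 ≤ lfunR v lam i x})
    (c : (Fin n → ℤ) → ℝ) (hc : ∀ u ∈ S, 0 ≤ c u)
    (hbasis : IsUnit (Matrix.of fun j k : Fin n => v (Fin.castLE hnd j) k).det)
    (hu0 : ∃ u₀ ∈ S, 0 < c u₀ ∧
      (∀ j : Fin n, lfun v lam (Fin.castLE hnd j) u₀ = 0) ∧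
      (∀ i : Fin d, n ≤ (i : ℕ) → 1 ≤ lfun v lam i u₀))
    (huk : ∀ k : Fin n, ∃ u ∈ S, 0 < c u ∧
      lfun v lam (Fin.castLE hnd k) u = 1 ∧
      (∀ j : Fin n, j ≠ k → lfun v lam (Fin.castLE hnd j) u = 0))
    (a : Fin d → ℤ)
    (k : Fin n) (t : Fin n → ℝ) :
    Tendsto (fun s : ℝ =>
        Real.exp (-2 * s) *
          pd2 (gzero v lam S c a)
            (xi (fun j p => (v (Fin.castLE hnd j) p : ℝ)) (Function.update t k s))
            (fun p => (v (Fin.castLE hnd k) p : ℝ))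
            (fun p => (v (Fin.castLE hnd k) p : ℝ)))
      atBot (nhds
        (2 * (∑ i : Fin d, (a i : ℝ)) *
            ((∑ u ∈ S.filter (fun u => lfun v lam (Fin.castLE hnd k) u = 1),
                bcoef v lam hnd c k t u) /
              (∑ u ∈ S.filter (fun u => lfun v lam (Fin.castLE hnd k) u = 0),
                bcoef v lam hnd c k t u)) -
          2 * (∑ i ∈ Finset.univ.erase (Fin.castLE hnd k), (a i : ℝ) *
            ((∑ u ∈ S.filter (fun u =>
                  lfun v lam (Fin.castLE hnd k) u = 1 ∧ 1 ≤ lfun v lam i u),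
                (lfun v lam i u : ℝ) * bcoef v lam hnd c k t u) /
              (∑ u ∈ S.filter (fun u =>
                  lfun v lam (Fin.castLE hnd k) u = 0 ∧ 1 ≤ lfun v lam i u),
                (lfun v lam i u : ℝ) * bcoef v lam hnd c k t u))) -
          4 * (a (Fin.castLE hnd k) : ℝ) *
            ((∑ u ∈ S.filter (fun u => lfun v lam (Fin.castLE hnd k) u = 2),
                bcoef v lam hnd c k t u) /
              (∑ u ∈ S.filter (fun u => lfun v lam (Fin.castLE hnd k) u = 1),
                bcoef v lam hnd c k t u)))) := by
  classical
  obtain ⟨u₀, hu₀S, hu₀c, hu₀l, hu₀l'⟩ := hu0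
  have hl0 : ∀ u ∈ S, ∀ i : Fin d, 0 ≤ lfun v lam i u := fun u hu => (hS u).mp hu
  have hQpos : ∀ x, 0 < GZ.PS S c x := fun x => GZ.PS_pos S c hc hu₀S hu₀c x
  have hPpos : ∀ (i : Fin d) (x : Fin n → ℝ),
      0 < GZ.PS S (fun u => c u * ((lfun v lam i u : ℤ):ℝ)) x := by
    intro i x
    have hnn : ∀ u ∈ S, 0 ≤ c u * ((lfun v lam i u : ℤ):ℝ) :=
      fun u hu => mul_nonneg (hc u hu) (by exact_mod_cast hl0 u hu i)
    by_cases hi : (i : ℕ) < n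
    · obtain ⟨u1, hu1S, hu1c, hu1k, hu1o⟩ := huk ⟨(i:ℕ), hi⟩
      have hcast : Fin.castLE hnd ⟨(i:ℕ), hi⟩ = i := by ext; rfl
      refine GZ.PS_pos S _ hnn hu1S ?_ x
      rw [hcast] at hu1k
      rw [hu1k]; simpa using hu1c
    · push_neg at hi
      refine GZ.PS_pos S _ hnn hu₀S ?_ x
      have h1 : (1:ℝ) ≤ ((lfun v lam i u₀ : ℤ):ℝ) := by exact_mod_cast hu₀l' i hi
      nlinarith
  -- pointwise second-derivative formula
  have hgz : gzero v lam S c a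
      = fun y => -(1/2) * ∑ i, ((a i : ℤ):ℝ)
          * Real.log (GZ.PS S (fun u => c u * ((lfun v lam i u : ℤ):ℝ)) y / GZ.PS S c y) := rfl
  have hp2 : ∀ x : Fin n → ℝ, pd2 (gzero v lam S c a) x
      (fun p => ((v (Fin.castLE hnd k) p : ℤ):ℝ)) (fun p => ((v (Fin.castLE hnd k) p : ℤ):ℝ))
      = -(1/2) * ∑ i, ((a i : ℤ):ℝ) *
          (((GZ.PS S (fun u => c u * ((lfun v lam i u : ℤ):ℝ)) x)⁻¹
              * GZ.PS S (fun u => (c u * ((lfun v lam i u : ℤ):ℝ)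
                  * (2 * GZ.ip u (fun p => ((v (Fin.castLE hnd k) p : ℤ):ℝ))))
                  * (2 * GZ.ip u (fun p => ((v (Fin.castLE hnd k) p : ℤ):ℝ)))) x
            - ((GZ.PS S (fun u => c u * ((lfun v lam i u : ℤ):ℝ)) x)^2)⁻¹
              * (GZ.PS S (fun u => c u * ((lfun v lam i u : ℤ):ℝ)
                  * (2 * GZ.ip u (fun p => ((v (Fin.castLE hnd k) p : ℤ):ℝ)))) x
                * GZ.PS S (fun u => c u * ((lfun v lam i u : ℤ):ℝ)
                  * (2 * GZ.ip u (fun p => ((v (Fin.castLE hnd k) p : ℤ):ℝ)))) x))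
          - ((GZ.PS S c x)⁻¹
              * GZ.PS S (fun u => (c u
                  * (2 * GZ.ip u (fun p => ((v (Fin.castLE hnd k) p : ℤ):ℝ))))
                  * (2 * GZ.ip u (fun p => ((v (Fin.castLE hnd k) p : ℤ):ℝ)))) x
            - ((GZ.PS S c x)^2)⁻¹
              * (GZ.PS S (fun u => c u
                  * (2 * GZ.ip u (fun p => ((v (Fin.castLE hnd k) p : ℤ):ℝ)))) x
                * GZ.PS S (fun u => c u
                  * (2 * GZ.ip u (fun p => ((v (Fin.castLE hnd k) p : ℤ):ℝ)))) x))) := by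
    intro x
    rw [hgz]
    exact GZ.pd2_formula S (fun i => ((a i:ℤ):ℝ))
      (fun i u => c u * ((lfun v lam i u : ℤ):ℝ)) c hPpos hQpos _ x

  -- the Q-part limit (β = c, j = 0)
  have hDc0 : (0:ℝ) < ∑ u ∈ S.filter (fun u => lfun v lam (Fin.castLE hnd k) u = (0:ℤ)),
      c u * Real.exp (2 * ∑ m ∈ Finset.univ.erase k,
        ((lfun v lam (Fin.castLE hnd m) u : ℤ):ℝ) * t m) := by
    refine Finset.sum_pos' (fun u hu => mul_nonneg (hc u (Finset.mem_filter.mp hu).1)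
      (Real.exp_pos _).le) ⟨u₀, Finset.mem_filter.mpr ⟨hu₀S, hu₀l k⟩,
      mul_pos hu₀c (Real.exp_pos _)⟩
  have Hc := GZ.bracket_tendsto hnd v lam S k t c 0 hQpos
    (fun u hu h => absurd h (not_lt.mpr (hl0 u hu _))) hDc0.ne'
  simp only [zero_add] at Hc
  have hX1 : (∑ u ∈ S.filter (fun u => lfun v lam (Fin.castLE hnd k) u = (1:ℤ)),
      c u * Real.exp (2 * ∑ m ∈ Finset.univ.erase k,
        ((lfun v lam (Fin.castLE hnd m) u : ℤ):ℝ) * t m))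
      = ∑ u ∈ S.filter (fun u => lfun v lam (Fin.castLE hnd k) u = 1),
          bcoef v lam hnd c k t u := rfl
  have hX0 : (∑ u ∈ S.filter (fun u => lfun v lam (Fin.castLE hnd k) u = (0:ℤ)),
      c u * Real.exp (2 * ∑ m ∈ Finset.univ.erase k,
        ((lfun v lam (Fin.castLE hnd m) u : ℤ):ℝ) * t m))
      = ∑ u ∈ S.filter (fun u => lfun v lam (Fin.castLE hnd k) u = 0),
          bcoef v lam hnd c k t u := rfl
  rw [hX1, hX0] at Hc
  -- the i-indexed limits
  have Hi : ∀ i : Fin d, Tendsto (fun s : ℝ => Real.exp (-2*s) *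
      ((GZ.PS S (fun u => c u * ((lfun v lam i u : ℤ):ℝ))
          (xi (fun j p => ((v (Fin.castLE hnd j) p : ℤ):ℝ)) (Function.update t k s)))⁻¹
        * GZ.PS S (fun u => (c u * ((lfun v lam i u : ℤ):ℝ)
            * (2 * GZ.ip u (fun p => ((v (Fin.castLE hnd k) p : ℤ):ℝ))))
            * (2 * GZ.ip u (fun p => ((v (Fin.castLE hnd k) p : ℤ):ℝ))))
          (xi (fun j p => ((v (Fin.castLE hnd j) p : ℤ):ℝ)) (Function.update t k s))
      - ((GZ.PS S (fun u => c u * ((lfun v lam i u : ℤ):ℝ))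
          (xi (fun j p => ((v (Fin.castLE hnd j) p : ℤ):ℝ)) (Function.update t k s)))^2)⁻¹
        * (GZ.PS S (fun u => c u * ((lfun v lam i u : ℤ):ℝ)
            * (2 * GZ.ip u (fun p => ((v (Fin.castLE hnd k) p : ℤ):ℝ))))
          (xi (fun j p => ((v (Fin.castLE hnd j) p : ℤ):ℝ)) (Function.update t k s))
          * GZ.PS S (fun u => c u * ((lfun v lam i u : ℤ):ℝ)
            * (2 * GZ.ip u (fun p => ((v (Fin.castLE hnd k) p : ℤ):ℝ))))
          (xi (fun j p => ((v (Fin.castLE hnd j) p : ℤ):ℝ)) (Function.update t k s)))))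
      atBot (nhds (if i = Fin.castLE hnd k
        then 4 * (2 * ∑ u ∈ S.filter (fun u => lfun v lam (Fin.castLE hnd k) u = 2),
            bcoef v lam hnd c k t u)
          / (∑ u ∈ S.filter (fun u => lfun v lam (Fin.castLE hnd k) u = 1),
            bcoef v lam hnd c k t u)
        else 4 * (∑ u ∈ S.filter (fun u =>
              lfun v lam (Fin.castLE hnd k) u = 1 ∧ 1 ≤ lfun v lam i u),
            (lfun v lam i u : ℝ) * bcoef v lam hnd c k t u)
          / (∑ u ∈ S.filter (fun u =>
              lfun v lam (Fin.castLE hnd k) u = 0 ∧ 1 ≤ lfun v lam i u),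
            (lfun v lam i u : ℝ) * bcoef v lam hnd c k t u))) := by
    intro i
    by_cases hik : i = Fin.castLE hnd k
    · subst hik
      rw [if_pos rfl]
      obtain ⟨uk, hukS, hukc, hukk, huko⟩ := huk k
      have hβk : ∀ u ∈ S, lfun v lam (Fin.castLE hnd k) u < 1 →
          c u * ((lfun v lam (Fin.castLE hnd k) u : ℤ):ℝ) = 0 := by
        intro u hu h
        have h0 : lfun v lam (Fin.castLE hnd k) u = 0 := by
          have := hl0 u hu (Fin.castLE hnd k); omega
        rw [h0]; simp
      have hDk0 : (0:ℝ) < ∑ u ∈ S.filter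
          (fun u => lfun v lam (Fin.castLE hnd k) u = (1:ℤ)),
          c u * ((lfun v lam (Fin.castLE hnd k) u : ℤ):ℝ)
            * Real.exp (2 * ∑ m ∈ Finset.univ.erase k,
              ((lfun v lam (Fin.castLE hnd m) u : ℤ):ℝ) * t m) := by
        refine Finset.sum_pos' (fun u hu => mul_nonneg (mul_nonneg
          (hc u (Finset.mem_filter.mp hu).1)
          (by exact_mod_cast hl0 u (Finset.mem_filter.mp hu).1 (Fin.castLE hnd k)))
          (Real.exp_pos _).le)
          ⟨uk, Finset.mem_filter.mpr ⟨hukS, hukk⟩, ?_⟩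
        rw [hukk]
        push_cast
        rw [mul_one]
        exact mul_pos hukc (Real.exp_pos _)
      have Hk := GZ.bracket_tendsto hnd v lam S k t
        (fun u => c u * ((lfun v lam (Fin.castLE hnd k) u : ℤ):ℝ)) 1
        (hPpos (Fin.castLE hnd k)) hβk hDk0.ne'
      beta_reduce at Hk
      have hknum : (∑ u ∈ S.filter
          (fun u => lfun v lam (Fin.castLE hnd k) u = (1:ℤ) + 1),
          c u * ((lfun v lam (Fin.castLE hnd k) u : ℤ):ℝ)
            * Real.exp (2 * ∑ m ∈ Finset.univ.erase k,
              ((lfun v lam (Fin.castLE hnd m) u : ℤ):ℝ) * t m))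
          = 2 * ∑ u ∈ S.filter (fun u => lfun v lam (Fin.castLE hnd k) u = 2),
              bcoef v lam hnd c k t u := by
        have hfilt : S.filter (fun u => lfun v lam (Fin.castLE hnd k) u = (1:ℤ) + 1)
            = S.filter (fun u => lfun v lam (Fin.castLE hnd k) u = 2) := by
          refine Finset.filter_congr fun u _ => ?_
          norm_num
        rw [hfilt, Finset.mul_sum]
        refine Finset.sum_congr rfl fun u hu => ?_
        rw [(Finset.mem_filter.mp hu).2]
        simp only [bcoef]
        push_cast
        ring
      have hkden : (∑ u ∈ S.filter
          (fun u => lfun v lam (Fin.castLE hnd k) u = (1:ℤ)),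
          c u * ((lfun v lam (Fin.castLE hnd k) u : ℤ):ℝ)
            * Real.exp (2 * ∑ m ∈ Finset.univ.erase k,
              ((lfun v lam (Fin.castLE hnd m) u : ℤ):ℝ) * t m))
          = ∑ u ∈ S.filter (fun u => lfun v lam (Fin.castLE hnd k) u = 1),
              bcoef v lam hnd c k t u := by
        refine Finset.sum_congr rfl fun u hu => ?_
        rw [(Finset.mem_filter.mp hu).2]
        simp only [bcoef]
        push_cast
        ring
      rw [hknum, hkden] at Hk
      exact Hk
    · rw [if_neg hik]
      have hβi : ∀ u ∈ S, lfun v lam (Fin.castLE hnd k) u < 0 →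
          c u * ((lfun v lam i u : ℤ):ℝ) = 0 :=
        fun u hu h => absurd h (not_lt.mpr (hl0 u hu _))
      have hDi0 : (0:ℝ) < ∑ u ∈ S.filter
          (fun u => lfun v lam (Fin.castLE hnd k) u = (0:ℤ)),
          c u * ((lfun v lam i u : ℤ):ℝ)
            * Real.exp (2 * ∑ m ∈ Finset.univ.erase k,
              ((lfun v lam (Fin.castLE hnd m) u : ℤ):ℝ) * t m) := by
        refine Finset.sum_pos' (fun u hu => mul_nonneg (mul_nonneg
          (hc u (Finset.mem_filter.mp hu).1)
          (by exact_mod_cast hl0 u (Finset.mem_filter.mp hu).1 i))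
          (Real.exp_pos _).le) ?_
        by_cases hi : (i : ℕ) < n
        · obtain ⟨u1, hu1S, hu1c, hu1k, hu1o⟩ := huk ⟨(i:ℕ), hi⟩
          have hcast : Fin.castLE hnd ⟨(i:ℕ), hi⟩ = i := by ext; rfl
          have hkne : k ≠ (⟨(i:ℕ), hi⟩ : Fin n) := by
            intro hcontra
            exact hik (by rw [← hcast, ← hcontra])
          refine ⟨u1, Finset.mem_filter.mpr ⟨hu1S, hu1o k hkne⟩, ?_⟩
          rw [hcast] at hu1k
          rw [hu1k]
          push_cast
          rw [mul_one]
          exact mul_pos hu1c (Real.exp_pos _)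
        · push_neg at hi
          refine ⟨u₀, Finset.mem_filter.mpr ⟨hu₀S, hu₀l k⟩, ?_⟩
          have h1 : (1:ℝ) ≤ ((lfun v lam i u₀ : ℤ):ℝ) := by
            exact_mod_cast hu₀l' i hi
          have hcastpos : (0:ℝ) < ((lfun v lam i u₀ : ℤ):ℝ) := by linarith
          exact mul_pos (mul_pos hu₀c hcastpos) (Real.exp_pos _)
      have Hne := GZ.bracket_tendsto hnd v lam S k t
        (fun u => c u * ((lfun v lam i u : ℤ):ℝ)) 0 (hPpos i) hβi hDi0.ne'
      simp only [zero_add] at Hne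
      beta_reduce at Hne
      have hnnum : (∑ u ∈ S.filter
          (fun u => lfun v lam (Fin.castLE hnd k) u = (1:ℤ)),
          c u * ((lfun v lam i u : ℤ):ℝ)
            * Real.exp (2 * ∑ m ∈ Finset.univ.erase k,
              ((lfun v lam (Fin.castLE hnd m) u : ℤ):ℝ) * t m))
          = ∑ u ∈ S.filter (fun u =>
              lfun v lam (Fin.castLE hnd k) u = 1 ∧ 1 ≤ lfun v lam i u),
            (lfun v lam i u : ℝ) * bcoef v lam hnd c k t u := by
        rw [← Finset.sum_filter_add_sum_filter_not
          (S.filter (fun u => lfun v lam (Fin.castLE hnd k) u = (1:ℤ)))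
          (fun u => 1 ≤ lfun v lam i u)]
        have hzero : (∑ u ∈ (S.filter
            (fun u => lfun v lam (Fin.castLE hnd k) u = (1:ℤ))).filter
            (fun u => ¬ 1 ≤ lfun v lam i u),
            c u * ((lfun v lam i u : ℤ):ℝ)
              * Real.exp (2 * ∑ m ∈ Finset.univ.erase k,
                ((lfun v lam (Fin.castLE hnd m) u : ℤ):ℝ) * t m)) = 0 := by
          refine Finset.sum_eq_zero fun u hu => ?_
          have huS : u ∈ S := (Finset.mem_filter.mp (Finset.mem_filter.mp hu).1).1
          have hle := (Finset.mem_filter.mp hu).2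
          have h0 : lfun v lam i u = 0 := by
            have := hl0 u huS i; omega
          rw [h0]; simp
        rw [hzero, add_zero, Finset.filter_filter]
        refine Finset.sum_congr rfl fun u hu => ?_
        simp only [bcoef]
        ring
      have hnden : (∑ u ∈ S.filter
          (fun u => lfun v lam (Fin.castLE hnd k) u = (0:ℤ)),
          c u * ((lfun v lam i u : ℤ):ℝ)
            * Real.exp (2 * ∑ m ∈ Finset.univ.erase k,
              ((lfun v lam (Fin.castLE hnd m) u : ℤ):ℝ) * t m))
          = ∑ u ∈ S.filter (fun u =>
              lfun v lam (Fin.castLE hnd k) u = 0 ∧ 1 ≤ lfun v lam i u),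
            (lfun v lam i u : ℝ) * bcoef v lam hnd c k t u := by
        rw [← Finset.sum_filter_add_sum_filter_not
          (S.filter (fun u => lfun v lam (Fin.castLE hnd k) u = (0:ℤ)))
          (fun u => 1 ≤ lfun v lam i u)]
        have hzero : (∑ u ∈ (S.filter
            (fun u => lfun v lam (Fin.castLE hnd k) u = (0:ℤ))).filter
            (fun u => ¬ 1 ≤ lfun v lam i u),
            c u * ((lfun v lam i u : ℤ):ℝ)
              * Real.exp (2 * ∑ m ∈ Finset.univ.erase k,
                ((lfun v lam (Fin.castLE hnd m) u : ℤ):ℝ) * t m)) = 0 := by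
          refine Finset.sum_eq_zero fun u hu => ?_
          have huS : u ∈ S := (Finset.mem_filter.mp (Finset.mem_filter.mp hu).1).1
          have hle := (Finset.mem_filter.mp hu).2
          have h0 : lfun v lam i u = 0 := by
            have := hl0 u huS i; omega
          rw [h0]; simp
        rw [hzero, add_zero, Finset.filter_filter]
        refine Finset.sum_congr rfl fun u hu => ?_
        simp only [bcoef]
        ring
      rw [hnnum, hnden] at Hne
      exact Hne
  -- combine everything
  have TFINAL := tendsto_finset_sum (Finset.univ : Finset (Fin d))
    (fun i _ => ((Hi i).sub Hc).const_mul (-(1/2) * ((a i : ℤ):ℝ)))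
  have hval : (∑ i : Fin d, -(1/2) * ((a i : ℤ):ℝ) *
      ((if i = Fin.castLE hnd k
        then 4 * (2 * ∑ u ∈ S.filter (fun u => lfun v lam (Fin.castLE hnd k) u = 2),
            bcoef v lam hnd c k t u)
          / (∑ u ∈ S.filter (fun u => lfun v lam (Fin.castLE hnd k) u = 1),
            bcoef v lam hnd c k t u)
        else 4 * (∑ u ∈ S.filter (fun u =>
              lfun v lam (Fin.castLE hnd k) u = 1 ∧ 1 ≤ lfun v lam i u),
            (lfun v lam i u : ℝ) * bcoef v lam hnd c k t u)
          / (∑ u ∈ S.filter (fun u =>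
              lfun v lam (Fin.castLE hnd k) u = 0 ∧ 1 ≤ lfun v lam i u),
            (lfun v lam i u : ℝ) * bcoef v lam hnd c k t u))
       - 4 * (∑ u ∈ S.filter (fun u => lfun v lam (Fin.castLE hnd k) u = 1),
            bcoef v lam hnd c k t u)
          / (∑ u ∈ S.filter (fun u => lfun v lam (Fin.castLE hnd k) u = 0),
            bcoef v lam hnd c k t u)))
      = (2 * (∑ i : Fin d, (a i : ℝ)) *
            ((∑ u ∈ S.filter (fun u => lfun v lam (Fin.castLE hnd k) u = 1),
                bcoef v lam hnd c k t u) /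
              (∑ u ∈ S.filter (fun u => lfun v lam (Fin.castLE hnd k) u = 0),
                bcoef v lam hnd c k t u)) -
          2 * (∑ i ∈ Finset.univ.erase (Fin.castLE hnd k), (a i : ℝ) *
            ((∑ u ∈ S.filter (fun u =>
                  lfun v lam (Fin.castLE hnd k) u = 1 ∧ 1 ≤ lfun v lam i u),
                (lfun v lam i u : ℝ) * bcoef v lam hnd c k t u) /
              (∑ u ∈ S.filter (fun u =>
                  lfun v lam (Fin.castLE hnd k) u = 0 ∧ 1 ≤ lfun v lam i u),
                (lfun v lam i u : ℝ) * bcoef v lam hnd c k t u))) -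
          4 * (a (Fin.castLE hnd k) : ℝ) *
            ((∑ u ∈ S.filter (fun u => lfun v lam (Fin.castLE hnd k) u = 2),
                bcoef v lam hnd c k t u) /
              (∑ u ∈ S.filter (fun u => lfun v lam (Fin.castLE hnd k) u = 1),
                bcoef v lam hnd c k t u))) := by
    rw [← Finset.add_sum_erase _ _ (Finset.mem_univ (Fin.castLE hnd k)),
      ← Finset.add_sum_erase _ (fun i => ((a i : ℤ):ℝ)) (Finset.mem_univ (Fin.castLE hnd k)),
      if_pos rfl]
    have herase : ∀ i ∈ Finset.univ.erase (Fin.castLE hnd k),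
        -(1/2) * ((a i : ℤ):ℝ) *
        ((if i = Fin.castLE hnd k
          then 4 * (2 * ∑ u ∈ S.filter (fun u => lfun v lam (Fin.castLE hnd k) u = 2),
              bcoef v lam hnd c k t u)
            / (∑ u ∈ S.filter (fun u => lfun v lam (Fin.castLE hnd k) u = 1),
              bcoef v lam hnd c k t u)
          else 4 * (∑ u ∈ S.filter (fun u =>
                lfun v lam (Fin.castLE hnd k) u = 1 ∧ 1 ≤ lfun v lam i u),
              (lfun v lam i u : ℝ) * bcoef v lam hnd c k t u)
            / (∑ u ∈ S.filter (fun u =>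
                lfun v lam (Fin.castLE hnd k) u = 0 ∧ 1 ≤ lfun v lam i u),
              (lfun v lam i u : ℝ) * bcoef v lam hnd c k t u))
         - 4 * (∑ u ∈ S.filter (fun u => lfun v lam (Fin.castLE hnd k) u = 1),
              bcoef v lam hnd c k t u)
            / (∑ u ∈ S.filter (fun u => lfun v lam (Fin.castLE hnd k) u = 0),
              bcoef v lam hnd c k t u))
        = ((a i : ℤ):ℝ) * ((∑ u ∈ S.filter (fun u =>
                lfun v lam (Fin.castLE hnd k) u = 1 ∧ 1 ≤ lfun v lam i u),
              (lfun v lam i u : ℝ) * bcoef v lam hnd c k t u)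
            / (∑ u ∈ S.filter (fun u =>
                lfun v lam (Fin.castLE hnd k) u = 0 ∧ 1 ≤ lfun v lam i u),
              (lfun v lam i u : ℝ) * bcoef v lam hnd c k t u)) * (-2)
          + ((a i : ℤ):ℝ) * (2 * ((∑ u ∈ S.filter
                (fun u => lfun v lam (Fin.castLE hnd k) u = 1),
              bcoef v lam hnd c k t u)
            / (∑ u ∈ S.filter (fun u => lfun v lam (Fin.castLE hnd k) u = 0),
              bcoef v lam hnd c k t u))) := by
      intro i hi
      rw [if_neg (Finset.mem_erase.mp hi).1]
      ring
    rw [Finset.sum_congr rfl herase, Finset.sum_add_distrib, ← Finset.sum_mul,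
      ← Finset.sum_mul]
    ring
  rw [hval] at TFINAL
  refine Tendsto.congr (fun s => ?_) TFINAL
  rw [hp2 (xi (fun j p => ((v (Fin.castLE hnd j) p : ℤ):ℝ)) (Function.update t k s))]
  rw [Finset.mul_sum, Finset.mul_sum]
  exact Finset.sum_congr rfl fun i _ => by ring
end
end
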